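/- arXiv:0902.3583 — 2 statements merged into one kernel-verified Lean document; each statement's English description precedes it below -/
import Mathlib

section
/- Whp the stopping time T of the Phase-1 process applied to the random formula Φ satisfies T < 4n k^{−1} ln ω. -/
open Finset MeasureTheory Filter
open scoped ENNReal

attribute [local instance] Classical.propDecidable

namespace RandomKSAT

/-- A literal over `n` variables: a pair (variable, sign), `true` = positive occurrence. -/
abbrev Lit (n : ℕ) := Fin n × Bool

/-- A `k`-SAT formula with `n` variables and `m` (ordered) clauses, each an ordered
`k`-tuple of literals. -/
abbrev Formula (n m k : ℕ) := Fin m → Fin k → Lit n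

instance formulaMS (n m k : ℕ) : MeasurableSpace (Formula n m k) := ⊤

/-- The probability of an event under the uniform distribution on `Ω_k(n,m)`. -/
noncomputable def Pr (n m k : ℕ) (A : Set (Formula n m k)) : ℝ :=
  ((Finset.univ.filter (fun Φ : Formula n m k => Φ ∈ A)).card : ℝ) /
    ((Finset.univ : Finset (Formula n m k)).card : ℝ)

/-- Expectation of a random variable with respect to the uniform distribution. -/
noncomputable def EV (n m k : ℕ) (f : Formula n m k → ℝ) : ℝ :=
  (∑ Φ : Formula n m k, f Φ) / (Fintype.card (Formula n m k) : ℝ)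

/-- The uniform probability measure on `Ω_k(n,m)`. -/
noncomputable def unif (n m k : ℕ) : Measure (Formula n m k) :=
  ((Fintype.card (Formula n m k) : ℝ≥0∞))⁻¹ • Measure.count

variable {n m k : ℕ}

/-- A literal is true under an assignment. -/
def litTrue (σ : Fin n → Bool) (l : Lit n) : Prop := σ l.1 = l.2

/-- An assignment satisfies a formula if every clause contains a true literal. -/
def sat (σ : Fin n → Bool) (Φ : Formula n m k) : Prop := ∀ i, ∃ j, litTrue σ (Φ i j)

/-- The assignment `σ_Z`: variables in `Z` are false, all others true. -/
noncomputable def sigmaZ (Z : Finset (Fin n)) : Fin n → Bool :=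
  fun x => if x ∈ Z then false else true

/-- Number of positive literals of clause `i`. -/
noncomputable def posCount (Φ : Formula n m k) (i : Fin m) : ℕ :=
  (Finset.univ.filter (fun j => (Φ i j).2 = true)).card

/-- Clause `i` is all-negative. -/
def allNeg (Φ : Formula n m k) (i : Fin m) : Prop := ∀ j, (Φ i j).2 = false

/-- The set of indices of `Z`-unique clauses: exactly one positive literal with variable
outside `Z`, and no negative literal with variable in `Z`. -/
noncomputable def Uset (Φ : Formula n m k) (Z : Finset (Fin n)) : Finset (Fin m) :=
  Finset.univ.filter (fun i =>
    (Finset.univ.filter (fun j => (Φ i j).2 = true ∧ (Φ i j).1 ∉ Z)).card = 1 ∧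
    ∀ j, (Φ i j).2 = false → (Φ i j).1 ∉ Z)

/-- `U_t(x)`: the number of `Z`-unique clauses in which `x` occurs positively. -/
noncomputable def Ux (Φ : Formula n m k) (Z : Finset (Fin n)) (x : Fin n) : ℕ :=
  ((Uset Φ Z).filter (fun i => ∃ j, Φ i j = (x, true))).card

/-- `k₁ = ⌈k/2⌉`. -/
def k1 (k : ℕ) : ℕ := (k + 1) / 2

/-- The map `π₀`: `Sum.inl b` records only the sign `b` of a literal, `Sum.inr l`
records the literal `l` itself (revealed). -/
noncomputable def pi0 (Φ : Formula n m k) (i : Fin m) (j : Fin k) : Bool ⊕ Lit n :=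
  if i ∈ Uset Φ ∅ ∧ (Φ i j).2 = true then Sum.inr (Φ i j) else Sum.inl (Φ i j).2

/-- State of the Phase-1 process: the set `Z_t`, the map `π_t`, the clause `φ_t`
and variable `z_t` chosen at the last step (if any), and whether the process stopped. -/
structure P1State (n m k : ℕ) where
  Z : Finset (Fin n)
  pi : Fin m → Fin k → Bool ⊕ Lit n
  lastPhi : Option (Fin m)
  lastZ : Option (Fin n)
  stopped : Bool

/-- One step (PI1--PI4) of the Phase-1 process. -/
noncomputable def p1step (Φ : Formula n m k) (s : P1State n m k) : P1State n m k :=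
  if s.stopped then s else
  let E := Finset.univ.filter (fun i : Fin m => allNeg Φ i ∧ ∀ j, (Φ i j).1 ∉ s.Z)
  if hE : E.Nonempty then
    if hk : 0 < k then
      let φt := E.min' hE
      let J := Finset.univ.filter
        (fun j : Fin k => j.val + 1 < k1 k ∧ Ux Φ s.Z ((Φ φt j).1) = 0)
      let jsel : Fin k :=
        if hJ : J.Nonempty then J.min' hJ
        else ⟨min (k1 k - 1) (k - 1), by
          have h1 := Nat.min_le_right (k1 k - 1) (k - 1); omega⟩
      let z := (Φ φt jsel).1
      let Z' := insert z s.Z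
      { Z := Z'
        pi := fun i j =>
          if (i = φt ∧ j.val < k1 k) ∨ (Φ i j).1 ∈ Z' ∨
             (i ∈ Uset Φ Z' ∧ pi0 Φ i j = Sum.inl true)
          then Sum.inr (Φ i j) else s.pi i j
        lastPhi := some φt
        lastZ := some z
        stopped := false }
    else { s with stopped := true, lastPhi := none, lastZ := none }
  else { s with stopped := true, lastPhi := none, lastZ := none }

/-- The Phase-1 process: state after `t` steps. -/
noncomputable def p1 (Φ : Formula n m k) : ℕ → P1State n m k
  | 0 => ⟨∅, pi0 Φ, none, none, false⟩
  | t + 1 => p1step Φ (p1 Φ t)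

/-- The stopping time `T` of the Phase-1 process. -/
noncomputable def TT (Φ : Formula n m k) : ℕ := sInf {t | (p1 Φ (t + 1)).stopped = true}

/-- The set `Z = Z_T` produced by Phase 1. -/
noncomputable def ZT (Φ : Formula n m k) : Finset (Fin n) := (p1 Φ (TT Φ)).Z

/-- The set `𝒰_t`: clauses with a positive literal, but such that at time `t` no
position shows `π_t(i,j) = 1` nor a negative literal with variable in `Z_t`. -/
noncomputable def curlyU (Φ : Formula n m k) (t : ℕ) : Finset (Fin m) :=
  Finset.univ.filter (fun i =>
    (∃ j, pi0 Φ i j ≠ Sum.inl false) ∧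
    ¬ ∃ j, (p1 Φ t).pi i j = Sum.inl true ∨
      ∃ x ∈ (p1 Φ t).Z, (p1 Φ t).pi i j = Sum.inr (x, false))

/-- The map `ψ_t : 𝒰_t → V` (junk value outside `𝒰_t`). -/
noncomputable def psi (hn : 0 < n) (Φ : Formula n m k) (t : ℕ) (i : Fin m) : Fin n :=
  let s := sInf {s | i ∈ curlyU Φ s}
  if h : (Finset.univ.filter
      (fun j : Fin k => (Φ i j).2 = true ∧ (Φ i j).1 ∉ (p1 Φ s).Z)).Nonempty then
    (Φ i ((Finset.univ.filter
      (fun j : Fin k => (Φ i j).2 = true ∧ (Φ i j).1 ∉ (p1 Φ s).Z)).min' h)).1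
  else ((p1 Φ s).lastZ).getD ⟨0, hn⟩

/-- Clause `i` is `(Z,Z')`-endangered. -/
def endangered (Φ : Formula n m k) (Z Z' : Finset (Fin n)) (i : Fin m) : Prop :=
  ¬ ∃ j, litTrue (sigmaZ Z) (Φ i j) ∧ (Φ i j).1 ∉ Z'

/-- A variable is `(Z,Z')`-unsafe. -/
def unsafeVar (Φ : Formula n m k) (Z Z' : Finset (Fin n)) (x : Fin n) : Prop :=
  x ∈ Z ∪ Z' ∨ ∃ i l, Φ i l = (x, true) ∧ ∀ j, j ≠ l →
    (((Φ i j).2 = true ∧ (Φ i j).1 ∈ Z ∪ Z') ∨ ((Φ i j).2 = false ∧ (Φ i j).1 ∉ Z))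

/-- The Phase-2 while-loop with fuel. -/
noncomputable def p2go (Φ : Formula n m k) (Z : Finset (Fin n)) :
    ℕ → Finset (Fin n) → Finset (Fin n)
  | 0, Z' => Z'
  | f + 1, Z' =>
    let Q := Finset.univ.filter (fun i : Fin m =>
      endangered Φ Z Z' i ∧
        (Finset.univ.filter (fun j => (Φ i j).1 ∈ Z')).card < 3)
    if hQ : Q.Nonempty then
      let i := Q.min' hQ
      let Ssafe := Finset.univ.filter (fun j : Fin k =>
        k1 k ≤ j.val ∧ j.val + 6 ≤ k ∧ ¬ unsafeVar Φ Z Z' ((Φ i j).1))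
      let S := if 3 ≤ Ssafe.card then Ssafe
        else Finset.univ.filter (fun j : Fin k => k ≤ j.val + 5 ∧ (Φ i j).1 ∉ Z')
      p2go Φ Z f (Z' ∪ (((S.sort (· ≤ ·)).take 3).map (fun j => (Φ i j).1)).toFinset)
    else Z'

/-- The set `Z'` produced by Phase 2. -/
noncomputable def p2 (Φ : Formula n m k) : Finset (Fin n) := p2go Φ (ZT Φ) m ∅

/-- `f` is a matching in the bipartite graph `G(Φ,Z,Z')` covering all
`(Z,Z')`-endangered clauses: it assigns to each endangered clause a variable of `Z'`
occurring in it, injectively on endangered clauses. -/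
def coversEndangered (Φ : Formula n m k) (Z Z' : Finset (Fin n)) (f : Fin m → Fin n) : Prop :=
  (∀ i, endangered Φ Z Z' i → f i ∈ Z' ∧ ∃ j, (Φ i j).1 = f i) ∧
  ∀ i i', endangered Φ Z Z' i → endangered Φ Z Z' i' → f i = f i' → i = i'

/-- The output of the algorithm `Fix` (Phase 3): the assignment `σ_{Z,Z',M}` if a
matching `M` covering all `(Z,Z')`-endangered clauses exists, `none` ("fail") otherwise. -/
noncomputable def fixOutput (Φ : Formula n m k) : Option (Fin n → Bool) :=
  if h : ∃ f : Fin m → Fin n, coversEndangered Φ (ZT Φ) (p2 Φ) f then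
    some (fun x =>
      if x ∈ ZT Φ ∧ x ∉ p2 Φ then false
      else if ∃ i, endangered Φ (ZT Φ) (p2 Φ) i ∧ Classical.choose h i = x ∧
          ∃ j, Φ i j = (x, false) then false
      else true)
  else none

/-- The `σ`-algebra `F_t` generated by the equivalence classes of `≡_t`. -/
noncomputable def Ft (n m k : ℕ) (t : ℕ) : MeasurableSpace (Formula n m k) :=
  MeasurableSpace.comap (fun Φ : Formula n m k => fun s : Fin (t + 1) => (p1 Φ s.val).pi) ⊤

/-- The `≡_t`-equivalence class of `Φ`. -/
noncomputable def cls (t : ℕ) (Φ : Formula n m k) : Finset (Formula n m k) :=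
  Finset.univ.filter (fun Ψ => ∀ s ≤ t, (p1 Ψ s).pi = (p1 Φ s).pi)

/-- The set `E_t` of positions whose literal is not yet revealed at time `t`. -/
noncomputable def Et (Φ : Formula n m k) (t : ℕ) : Finset (Fin m × Fin k) :=
  Finset.univ.filter (fun p => ∃ b, (p1 Φ t).pi p.1 p.2 = Sum.inl b)

/-- `ω = (1-ε) ln k`. -/
noncomputable def omOf (ε : ℝ) (k : ℕ) : ℝ := (1 - ε) * Real.log k

/-- `m = ⌊(1-ε) 2^k k⁻¹ (ln k) n⌋`. -/
noncomputable def mOf (ε : ℝ) (k n : ℕ) : ℕ := ⌊(1 - ε) * 2 ^ k * Real.log k / k * n⌋₊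

/-- `θ = ⌊4 n k⁻¹ ln ω⌋`. -/
noncomputable def thetaOf (ε : ℝ) (k n : ℕ) : ℕ := ⌊4 * (n : ℝ) / k * Real.log (omOf ε k)⌋₊

/-- The indicator random variable `B_t` of Corollary 9. -/
noncomputable def Bt (ε : ℝ) (n m k : ℕ) (t : ℕ) : Formula n m k → ℝ := fun Φ =>
  if t ≤ TT Φ ∧
      (∃ i, (p1 Φ t).lastPhi = some i ∧
        ∀ j : Fin k, j.val + 1 < k1 k → 0 < Ux Φ (p1 Φ (t - 1)).Z ((Φ i j).1)) ∧
      ((n : ℝ) * (k : ℝ) ^ (ε / 2 - 1) ≤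
        ((Finset.univ.filter (fun x : Fin n =>
          x ∉ (p1 Φ (t - 1)).Z ∧ Ux Φ (p1 Φ (t - 1)).Z x = 0)).card : ℝ)) ∧
      (((Uset Φ (p1 Φ t).Z).card : ℝ) ≤ (1 + ε / 3) * omOf ε k * n)
  then 1 else 0

/-- The indicator `H_{tij}`. -/
noncomputable def Hind (n m k : ℕ) (t : ℕ) (i : Fin m) (j : Fin k) : Formula n m k → ℝ :=
  fun Φ =>
  if (p1 Φ (t - 1)).pi i j = Sum.inl true ∧
      ∃ z, (p1 Φ t).lastZ = some z ∧ (p1 Φ t).pi i j = Sum.inr (z, true)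
  then 1 else 0

/-- The indicator `S_{tij}`. -/
noncomputable def Sind (n m k : ℕ) (t : ℕ) (i : Fin m) (j : Fin k) : Formula n m k → ℝ :=
  fun Φ => if t ≤ TT Φ ∧ ∃ b, (p1 Φ t).pi i j = Sum.inl b then 1 else 0


/-! ### Auxiliary development for Statement 11 -/

section Aux11

variable {n m k : ℕ}

/-- The set of all-negative clauses avoiding `Z` (the set `E` of step PI1). -/
noncomputable def ENeg (Φ : Formula n m k) (Z : Finset (Fin n)) : Finset (Fin m) :=
  Finset.univ.filter (fun i => allNeg Φ i ∧ ∀ j, (Φ i j).1 ∉ Z)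

/-- The selected position of step PI2, with the true `Ux`. -/
noncomputable def jselP (Φ : Formula n m k) (Z : Finset (Fin n)) (i : Fin m)
    (hk : 0 < k) : Fin k :=
  if hJ : (Finset.univ.filter
      (fun j : Fin k => j.val + 1 < k1 k ∧ Ux Φ Z ((Φ i j).1) = 0)).Nonempty
  then (Finset.univ.filter
      (fun j : Fin k => j.val + 1 < k1 k ∧ Ux Φ Z ((Φ i j).1) = 0)).min' hJ
  else ⟨min (k1 k - 1) (k - 1), by
    have h1 := Nat.min_le_right (k1 k - 1) (k - 1); omega⟩

/-- The selected variable of step PI2, with the true `Ux`. -/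
noncomputable def zselP (Φ : Formula n m k) (Z : Finset (Fin n)) (i : Fin m)
    (hk : 0 < k) : Fin n :=
  (Φ i (jselP Φ Z i hk)).1

/-- `Ux` computed using only the clauses outside `S`. -/
noncomputable def UxS (Φ : Formula n m k) (S : Finset (Fin m)) (Z : Finset (Fin n))
    (x : Fin n) : ℕ :=
  (Finset.univ.filter (fun i : Fin m => i ∉ S ∧
    (((Finset.univ.filter (fun j => (Φ i j).2 = true ∧ (Φ i j).1 ∉ Z)).card = 1 ∧
      ∀ j, (Φ i j).2 = false → (Φ i j).1 ∉ Z) ∧ ∃ j, Φ i j = (x, true)))).card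

/-- The selected position of step PI2, with `UxS`. -/
noncomputable def jselS (Φ : Formula n m k) (S : Finset (Fin m)) (Z : Finset (Fin n))
    (i : Fin m) (hk : 0 < k) : Fin k :=
  if hJ : (Finset.univ.filter
      (fun j : Fin k => j.val + 1 < k1 k ∧ UxS Φ S Z ((Φ i j).1) = 0)).Nonempty
  then (Finset.univ.filter
      (fun j : Fin k => j.val + 1 < k1 k ∧ UxS Φ S Z ((Φ i j).1) = 0)).min' hJ
  else ⟨min (k1 k - 1) (k - 1), by
    have h1 := Nat.min_le_right (k1 k - 1) (k - 1); omega⟩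

/-- The selected variable of step PI2, with `UxS`. -/
noncomputable def zselS (Φ : Formula n m k) (S : Finset (Fin m)) (Z : Finset (Fin n))
    (i : Fin m) (hk : 0 < k) : Fin n :=
  (Φ i (jselS Φ S Z i hk)).1

/-- The simulated set `Z_t`, driven by the clause sequence `seq`. -/
noncomputable def Zhat (Φ : Formula n m k) (S : Finset (Fin m)) (seq : ℕ → Fin m)
    (hk : 0 < k) : ℕ → Finset (Fin n)
  | 0 => ∅
  | t + 1 => insert (zselS Φ S (Zhat Φ S seq hk t) (seq t) hk) (Zhat Φ S seq hk t)

/-- The witness property: the clauses `seq 0, …, seq (t-1)` are all-negative and each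
avoids the simulated set at its time. -/
def Wt (Φ : Formula n m k) (S : Finset (Fin m)) (seq : ℕ → Fin m) (hk : 0 < k)
    (t : ℕ) : Prop :=
  ∀ s < t, allNeg Φ (seq s) ∧ ∀ j, (Φ (seq s) j).1 ∉ Zhat Φ S seq hk s

lemma allNeg_not_mem_Uset {Φ : Formula n m k} {Z : Finset (Fin n)} {i : Fin m}
    (h : allNeg Φ i) : i ∉ Uset Φ Z := by
  intro hmem
  rw [Uset, Finset.mem_filter] at hmem
  have h1 := hmem.2.1
  have : (Finset.univ.filter (fun j => (Φ i j).2 = true ∧ (Φ i j).1 ∉ Z)) = ∅ := by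
    apply Finset.filter_eq_empty_iff.2
    intro j _
    rw [h j]
    simp
  rw [this] at h1
  simp at h1

lemma UxS_eq_Ux {Φ : Formula n m k} {S : Finset (Fin m)} {Z : Finset (Fin n)} {x : Fin n}
    (hS : ∀ i ∈ S, allNeg Φ i) : UxS Φ S Z x = Ux Φ Z x := by
  rw [UxS, Ux, Uset, Finset.filter_filter]
  congr 1
  apply Finset.filter_congr
  intro i _
  constructor
  · rintro ⟨-, h2, h3⟩; exact ⟨h2, h3⟩
  · rintro ⟨h2, h3⟩
    refine ⟨fun hiS => ?_, h2, h3⟩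
    have : (Finset.univ.filter (fun j => (Φ i j).2 = true ∧ (Φ i j).1 ∉ Z)) = ∅ := by
      apply Finset.filter_eq_empty_iff.2
      intro j _
      rw [hS i hiS j]
      simp
    rw [this] at h2
    simp at h2

lemma UxS_congr {Φ₁ Φ₂ : Formula n m k} {S : Finset (Fin m)} {Z : Finset (Fin n)}
    {x : Fin n} (h : ∀ i ∉ S, Φ₁ i = Φ₂ i) : UxS Φ₁ S Z x = UxS Φ₂ S Z x := by
  rw [UxS, UxS]
  congr 1
  apply Finset.filter_congr
  intro i _
  by_cases hi : i ∈ S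
  · simp [hi]
  · rw [h i hi]

lemma zselS_congr {Φ₁ Φ₂ : Formula n m k} {S : Finset (Fin m)} {Z : Finset (Fin n)}
    {i : Fin m} (hk : 0 < k) (h : ∀ i' ∉ S, Φ₁ i' = Φ₂ i') (hi : Φ₁ i = Φ₂ i) :
    zselS Φ₁ S Z i hk = zselS Φ₂ S Z i hk := by
  have hJ : (Finset.univ.filter
      (fun j : Fin k => j.val + 1 < k1 k ∧ UxS Φ₁ S Z ((Φ₁ i j).1) = 0)) =
      (Finset.univ.filter
      (fun j : Fin k => j.val + 1 < k1 k ∧ UxS Φ₂ S Z ((Φ₂ i j).1) = 0)) := by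
    apply Finset.filter_congr
    intro j _
    rw [show Φ₁ i j = Φ₂ i j from congrFun hi j, UxS_congr h]
  simp only [zselS, jselS, hi, UxS_congr h]

lemma Zhat_congr {Φ₁ Φ₂ : Formula n m k} {S : Finset (Fin m)} {seq : ℕ → Fin m}
    (hk : 0 < k) {t : ℕ} (h : ∀ i ∉ S, Φ₁ i = Φ₂ i)
    (hseq : ∀ s < t, Φ₁ (seq s) = Φ₂ (seq s)) :
    Zhat Φ₁ S seq hk t = Zhat Φ₂ S seq hk t := by
  induction t with
  | zero => rfl
  | succ t ih =>
    have hZ := ih (fun s hs => hseq s (Nat.lt_succ_of_lt hs))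
    simp only [Zhat]
    rw [hZ, zselS_congr hk h (hseq t (Nat.lt_succ_self t))]

lemma Zhat_seq_congr {Φ : Formula n m k} {S : Finset (Fin m)} {seq₁ seq₂ : ℕ → Fin m}
    (hk : 0 < k) {t : ℕ} (hseq : ∀ s < t, seq₁ s = seq₂ s) :
    Zhat Φ S seq₁ hk t = Zhat Φ S seq₂ hk t := by
  induction t with
  | zero => rfl
  | succ t ih =>
    have hZ := ih (fun s hs => hseq s (Nat.lt_succ_of_lt hs))
    simp only [Zhat]
    rw [hZ, hseq t (Nat.lt_succ_self t)]

lemma Zhat_card {Φ : Formula n m k} {S : Finset (Fin m)} {seq : ℕ → Fin m}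
    (hk : 0 < k) {t : ℕ} (hW : Wt Φ S seq hk t) :
    (Zhat Φ S seq hk t).card = t := by
  induction t with
  | zero => rfl
  | succ t ih =>
    have h1 : zselS Φ S (Zhat Φ S seq hk t) (seq t) hk ∉ Zhat Φ S seq hk t :=
      (hW t (Nat.lt_succ_self t)).2 _
    simp only [Zhat]
    rw [Finset.card_insert_of_notMem h1, ih (fun s hs => hW s (Nat.lt_succ_of_lt hs))]


lemma p1step_stopped_of_stopped {Φ : Formula n m k} {s : P1State n m k}
    (h : s.stopped = true) : (p1step Φ s).stopped = true := by
  rw [p1step, if_pos h]; exact h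

lemma p1_stopped_false_of_succ {Φ : Formula n m k} {t : ℕ}
    (h : (p1 Φ (t + 1)).stopped = false) : (p1 Φ t).stopped = false := by
  by_contra hc
  rw [Bool.not_eq_false] at hc
  have := p1step_stopped_of_stopped (Φ := Φ) hc
  rw [show p1step Φ (p1 Φ t) = p1 Φ (t + 1) from rfl, h] at this
  exact Bool.false_ne_true this

lemma p1step_run {Φ : Formula n m k} {s : P1State n m k}
    (hs : s.stopped = false) (hE : (ENeg Φ s.Z).Nonempty) (hk : 0 < k) :
    (p1step Φ s).stopped = false ∧
    (p1step Φ s).lastPhi = some ((ENeg Φ s.Z).min' hE) ∧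
    (p1step Φ s).Z = insert (zselP Φ s.Z ((ENeg Φ s.Z).min' hE) hk) s.Z := by
  have hE' : (Finset.univ.filter
      (fun i : Fin m => allNeg Φ i ∧ ∀ j, (Φ i j).1 ∉ s.Z)).Nonempty := hE
  rw [p1step, if_neg (by rw [hs]; exact Bool.false_ne_true)]
  simp only [dif_pos hE', dif_pos hk]
  exact ⟨trivial, rfl, rfl⟩

lemma p1step_notrun {Φ : Formula n m k} {s : P1State n m k}
    (hs : s.stopped = false) (h : ¬ ((ENeg Φ s.Z).Nonempty ∧ 0 < k)) :
    (p1step Φ s).stopped = true := by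
  rw [p1step, if_neg (by rw [hs]; exact Bool.false_ne_true)]
  by_cases hE : (Finset.univ.filter
      (fun i : Fin m => allNeg Φ i ∧ ∀ j, (Φ i j).1 ∉ s.Z)).Nonempty
  · have hk : ¬ 0 < k := fun hk => h ⟨hE, hk⟩
    simp only [dif_pos hE, dif_neg hk]
  · simp only [dif_neg hE]

/-- If step `t+1` of the process ran (did not stop), its full specification. -/
lemma p1_run_spec {Φ : Formula n m k} {t : ℕ}
    (h : (p1 Φ (t + 1)).stopped = false) (hk : 0 < k) :
    ∃ hE : (ENeg Φ (p1 Φ t).Z).Nonempty,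
      (p1 Φ (t + 1)).lastPhi = some ((ENeg Φ (p1 Φ t).Z).min' hE) ∧
      (p1 Φ (t + 1)).Z =
        insert (zselP Φ (p1 Φ t).Z ((ENeg Φ (p1 Φ t).Z).min' hE) hk) (p1 Φ t).Z := by
  have hs : (p1 Φ t).stopped = false := p1_stopped_false_of_succ h
  by_cases hE : (ENeg Φ (p1 Φ t).Z).Nonempty
  · obtain ⟨-, h2, h3⟩ := p1step_run (Φ := Φ) hs hE hk
    exact ⟨hE, h2, h3⟩
  · exfalso
    have := p1step_notrun (Φ := Φ) hs (fun hc => hE hc.1)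
    rw [show p1step Φ (p1 Φ t) = p1 Φ (t + 1) from rfl, h] at this
    exact Bool.false_ne_true this


lemma zselS_eq_zselP {Φ : Formula n m k} {S : Finset (Fin m)} {Z : Finset (Fin n)}
    {i : Fin m} (hk : 0 < k) (hS : ∀ i' ∈ S, allNeg Φ i') :
    zselS Φ S Z i hk = zselP Φ Z i hk := by
  simp only [zselS, zselP, jselS, jselP, UxS_eq_Ux hS]

/-- The truncated sequence associated with a tuple. -/
def seqOf {m : ℕ} (θ : ℕ) (hθ : 0 < θ) (e : Fin θ → Fin m) : ℕ → Fin m :=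
  fun t => e ⟨min t (θ - 1), lt_of_le_of_lt (Nat.min_le_right _ _) (Nat.sub_lt hθ one_pos)⟩

lemma seqOf_eq {θ : ℕ} (hθ : 0 < θ) (e : Fin θ → Fin m) {s : ℕ} (hs : s < θ) :
    seqOf θ hθ e s = e ⟨s, hs⟩ := by
  have : min s (θ - 1) = s := Nat.min_eq_left (by omega)
  simp only [seqOf]
  congr 1
  exact Fin.ext this

/-- Extraction of the witness structure from a long run of the process. -/
lemma extract {Φ : Formula n m k} (hk : 0 < k) {θ : ℕ} (hθ : 0 < θ)
    (hrun : ∀ t ≤ θ, (p1 Φ t).stopped = false) :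
    ∃ e : Fin θ → Fin m, StrictMono e ∧
      Wt Φ (Finset.image e Finset.univ) (seqOf θ hθ e) hk θ := by
  have hstep : ∀ t < θ, ∃ hE : (ENeg Φ (p1 Φ t).Z).Nonempty,
      (p1 Φ (t + 1)).lastPhi = some ((ENeg Φ (p1 Φ t).Z).min' hE) ∧
      (p1 Φ (t + 1)).Z =
        insert (zselP Φ (p1 Φ t).Z ((ENeg Φ (p1 Φ t).Z).min' hE) hk) (p1 Φ t).Z :=
    fun t ht => p1_run_spec (hrun (t + 1) ht) hk
  obtain ⟨hE0, -, -⟩ := hstep 0 hθ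
  obtain ⟨i₀, -⟩ := hE0
  set eN : ℕ → Fin m := fun t => ((p1 Φ (t + 1)).lastPhi).getD i₀ with heN
  have heq : ∀ t < θ, ∃ hE : (ENeg Φ (p1 Φ t).Z).Nonempty,
      eN t = (ENeg Φ (p1 Φ t).Z).min' hE ∧
      (p1 Φ (t + 1)).Z = insert (zselP Φ (p1 Φ t).Z (eN t) hk) (p1 Φ t).Z := by
    intro t ht
    obtain ⟨hE, h1, h2⟩ := hstep t ht
    have he : eN t = (ENeg Φ (p1 Φ t).Z).min' hE := by
      show ((p1 Φ (t + 1)).lastPhi).getD i₀ = _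
      rw [h1]; rfl
    exact ⟨hE, he, by rw [he]; exact h2⟩
  have hmem : ∀ t < θ, eN t ∈ ENeg Φ (p1 Φ t).Z := by
    intro t ht
    obtain ⟨hE, h1, -⟩ := heq t ht
    rw [h1]
    exact Finset.min'_mem _ _
  have hcond : ∀ t < θ, allNeg Φ (eN t) ∧ ∀ j, (Φ (eN t) j).1 ∉ (p1 Φ t).Z := by
    intro t ht
    have := hmem t ht
    rw [ENeg, Finset.mem_filter] at this
    exact this.2
  have hlt : ∀ t, t + 1 < θ → eN t < eN (t + 1) := by
    intro t ht
    obtain ⟨hE, hmin, hZ⟩ := heq t (by omega)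
    obtain ⟨hE', hmin', hZ'⟩ := heq (t + 1) ht
    have h1 : eN (t + 1) ∈ ENeg Φ (p1 Φ (t + 1)).Z := hmem (t + 1) ht
    have h2 : eN (t + 1) ∈ ENeg Φ (p1 Φ t).Z := by
      rw [ENeg, Finset.mem_filter] at h1 ⊢
      refine ⟨Finset.mem_univ _, h1.2.1, fun j hj => h1.2.2 j ?_⟩
      rw [hZ]
      exact Finset.mem_insert_of_mem hj
    have hle : eN t ≤ eN (t + 1) := by
      rw [hmin]
      exact Finset.min'_le _ _ h2
    refine lt_of_le_of_ne hle (fun hne => ?_)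
    have h3 : eN t ∉ ENeg Φ (p1 Φ (t + 1)).Z := by
      rw [ENeg, Finset.mem_filter]
      rintro ⟨-, -, h4⟩
      exact h4 (jselP Φ (p1 Φ t).Z (eN t) hk)
        (by rw [hZ]; exact Finset.mem_insert_self _ _)
    rw [hne] at h3
    exact h3 h1
  have hmono : ∀ s t, s < t → t < θ → eN s < eN t := by
    intro s t hst htθ
    induction t with
    | zero => omega
    | succ t ih =>
      rcases Nat.lt_succ_iff_lt_or_eq.1 hst with h | h
      · exact lt_trans (ih h (by omega)) (hlt t htθ)
      · subst h; exact hlt s htθ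
  set S := (Finset.range θ).image eN with hSdef
  have hSall : ∀ i ∈ S, allNeg Φ i := by
    intro i hi
    rw [hSdef, Finset.mem_image] at hi
    obtain ⟨s, hs, rfl⟩ := hi
    exact (hcond s (Finset.mem_range.1 hs)).1
  have hZmatch : ∀ t ≤ θ, Zhat Φ S eN hk t = (p1 Φ t).Z := by
    intro t
    induction t with
    | zero => intro; rfl
    | succ t ih =>
      intro ht
      obtain ⟨hE, hmin, hZ⟩ := heq t (by omega)
      simp only [Zhat]
      rw [ih (by omega), zselS_eq_zselP hk hSall, hZ]
  refine ⟨fun t => eN t.val, fun a b hab => hmono a.val b.val hab b.isLt, ?_⟩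
  have hseq' : ∀ s < θ, seqOf θ hθ (fun t : Fin θ => eN t.val) s = eN s := by
    intro s hs
    rw [seqOf_eq hθ _ hs]
  have hS' : Finset.image (fun t : Fin θ => eN t.val) Finset.univ = S := by
    rw [hSdef]
    ext i
    simp only [Finset.mem_image, Finset.mem_univ, true_and, Finset.mem_range]
    constructor
    · rintro ⟨t, rfl⟩; exact ⟨t.val, t.isLt, rfl⟩
    · rintro ⟨s, hs, rfl⟩; exact ⟨⟨s, hs⟩, rfl⟩
  intro s hsθ
  have hZh : Zhat Φ (Finset.image (fun t : Fin θ => eN t.val) Finset.univ)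
      (seqOf θ hθ (fun t : Fin θ => eN t.val)) hk s = (p1 Φ s).Z := by
    rw [hS']
    rw [Zhat_seq_congr hk (fun s' hs' => hseq' s' (lt_trans hs' hsθ))]
    exact hZmatch s (le_of_lt hsθ)
  rw [hseq' s hsθ, hZh]
  exact hcond s hsθ


/-- The fixed-clauses variant of the witness property used in the counting induction. -/
def WFix {n m k : ℕ} (S : Finset (Fin m)) (seq : ℕ → Fin m) (hk : 0 < k) (θ : ℕ)
    (c₀ : Fin k → Lit n) (t : ℕ) (Φ : Formula n m k) : Prop :=
  Wt Φ S seq hk t ∧ ∀ s, t ≤ s → s < θ → Φ (seq s) = c₀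

/-- The key counting bound: the number of formulas satisfying the witness property is at
most `∏_{t<θ} (n-t)^k` times the number of ways to fill the remaining clauses. -/
lemma count_W (hn : 0 < n) (hk : 0 < k) {θ : ℕ} (S : Finset (Fin m)) (seq : ℕ → Fin m)
    (hseqS : ∀ s < θ, seq s ∈ S)
    (hinj : ∀ s t, s < θ → t < θ → seq s = seq t → s = t) :
    (Finset.univ.filter (fun Φ : Formula n m k => Wt Φ S seq hk θ)).card ≤
      (∏ t ∈ Finset.range θ, (n - t) ^ k) *
        (Fintype.card (Fin k → Lit n)) ^ (m - θ) := by
  set c₀ : Fin k → Lit n := fun _ => (⟨0, hn⟩, false) with hc₀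
  -- base case: all the witness clauses are fixed to the junk clause `c₀`
  have hbase : (Finset.univ.filter (WFix S seq hk θ c₀ 0)).card ≤
      (Fintype.card (Fin k → Lit n)) ^ (m - θ) := by
    set I : Finset (Fin m) := (Finset.range θ).image seq with hI
    have hIcard : I.card = θ := by
      rw [hI, Finset.card_image_of_injOn, Finset.card_range]
      intro s hs t ht hst
      exact hinj s t (Finset.mem_range.1 hs) (Finset.mem_range.1 ht) hst
    have hmaps : ∀ Φ ∈ Finset.univ.filter (WFix S seq hk θ c₀ 0),
        (fun i : {i : Fin m // i ∉ I} => Φ i.val) ∈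
          (Finset.univ : Finset ({i : Fin m // i ∉ I} → (Fin k → Lit n))) :=
      fun _ _ => Finset.mem_univ _
    have hinj2 : Set.InjOn (fun Φ : Formula n m k =>
        (fun i : {i : Fin m // i ∉ I} => Φ i.val))
        (Finset.univ.filter (WFix S seq hk θ c₀ 0)) := by
      intro Φ₁ h₁ Φ₂ h₂ hρ
      rw [Finset.coe_filter, Set.mem_setOf_eq] at h₁ h₂
      funext i
      by_cases hi : i ∈ I
      · rw [hI, Finset.mem_image] at hi
        obtain ⟨s, hs, rfl⟩ := hi
        rw [h₁.2.2 s (Nat.zero_le s) (Finset.mem_range.1 hs),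
          h₂.2.2 s (Nat.zero_le s) (Finset.mem_range.1 hs)]
      · exact congrFun hρ ⟨i, hi⟩
    have hcard := Finset.card_le_card_of_injOn _ hmaps hinj2
    rw [Finset.card_univ, Fintype.card_fun, Fintype.card_subtype_compl,
      Fintype.card_coe, hIcard, Fintype.card_fin] at hcard
    exact hcard
  -- inductive step
  have hstep : ∀ t, t < θ →
      (Finset.univ.filter (WFix S seq hk θ c₀ (t + 1))).card ≤
        (n - t) ^ k * (Finset.univ.filter (WFix S seq hk θ c₀ t)).card := by
    intro t ht
    set allowed : Formula n m k → Finset (Fin k → Lit n) := fun Φ' =>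
      Finset.univ.filter (fun c => (∀ j, (c j).2 = false) ∧
        ∀ j, (c j).1 ∉ Zhat Φ' S seq hk t) with hallowed
    have hcard_allowed : ∀ Φ' : Formula n m k, Wt Φ' S seq hk t →
        (allowed Φ').card = (n - t) ^ k := by
      intro Φ' hWt'
      have hZcard : (Zhat Φ' S seq hk t).card = t := Zhat_card hk hWt'
      set B : Finset (Lit n) := Finset.univ.filter
        (fun l : Lit n => l.2 = false ∧ l.1 ∉ Zhat Φ' S seq hk t) with hB
      have h1 : allowed Φ' = Fintype.piFinset (fun _ : Fin k => B) := by
        ext c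
        simp only [hallowed, Finset.mem_filter, Finset.mem_univ, true_and,
          Fintype.mem_piFinset, hB, forall_and]
      have hBcard : B.card = n - t := by
        have h2 : B = (Finset.univ \ Zhat Φ' S seq hk t).image (fun x => (x, false)) := by
          ext l
          obtain ⟨x, b⟩ := l
          rw [hB, Finset.mem_filter, Finset.mem_image]
          constructor
          · rintro ⟨-, hb, hx⟩
            exact ⟨x, Finset.mem_sdiff.2 ⟨Finset.mem_univ _, hx⟩, Prod.ext rfl hb.symm⟩
          · rintro ⟨y, hy, heq⟩
            obtain ⟨-, hy2⟩ := Finset.mem_sdiff.1 hy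
            have heq' : (y, false) = (x, b) := heq
            cases heq'
            exact ⟨Finset.mem_univ _, rfl, hy2⟩
        have hinj3 : Function.Injective (fun x : Fin n => ((x, false) : Lit n)) := by
          intro a b hab
          exact (Prod.ext_iff.1 hab).1
        rw [h2, Finset.card_image_of_injective _ hinj3,
          Finset.card_sdiff_of_subset (Finset.subset_univ _), hZcard, Finset.card_univ,
          Fintype.card_fin]
      rw [h1, Fintype.card_piFinset]
      simp [hBcard]
    have hmaps : ∀ Φ ∈ Finset.univ.filter (WFix S seq hk θ c₀ (t + 1)),
        (⟨Function.update Φ (seq t) c₀, Φ (seq t)⟩ :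
          Σ _ : Formula n m k, (Fin k → Lit n)) ∈
          (Finset.univ.filter (WFix S seq hk θ c₀ t)).sigma allowed := by
      intro Φ hΦ
      rw [Finset.mem_filter] at hΦ
      obtain ⟨-, hW, hJ⟩ := hΦ
      have hoff : ∀ i ∉ S, Function.update Φ (seq t) c₀ i = Φ i := by
        intro i hi
        refine Function.update_of_ne (fun he => hi ?_) _ _
        rw [he]
        exact hseqS t ht
      have hseqeq : ∀ s, s < θ → s ≠ t →
          Function.update Φ (seq t) c₀ (seq s) = Φ (seq s) := by
        intro s hs hst
        exact Function.update_of_ne (fun he => hst (hinj s t hs ht he)) _ _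
      have hZa : ∀ u, u ≤ t →
          Zhat (Function.update Φ (seq t) c₀) S seq hk u = Zhat Φ S seq hk u := by
        intro u hu
        exact Zhat_congr hk hoff (fun s hs => hseqeq s (by omega) (by omega))
      rw [Finset.mem_sigma]
      constructor
      · show Function.update Φ (seq t) c₀ ∈ Finset.univ.filter (WFix S seq hk θ c₀ t)
        rw [Finset.mem_filter]
        refine ⟨Finset.mem_univ _, ?_, ?_⟩
        · intro s hs
          have h5 := hW s (by omega)
          constructor
          · show ∀ j, ((Function.update Φ (seq t) c₀ (seq s)) j).2 = false
            rw [hseqeq s (by omega) (by omega)]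
            exact h5.1
          · intro j
            rw [hseqeq s (by omega) (by omega), hZa s (by omega)]
            exact h5.2 j
        · intro s hs1 hs2
          rcases Nat.eq_or_lt_of_le hs1 with h | h
          · rw [← h]
            exact Function.update_self _ _ _
          · rw [hseqeq s hs2 (by omega)]
            exact hJ s h hs2
      · show Φ (seq t) ∈ allowed (Function.update Φ (seq t) c₀)
        rw [hallowed]
        rw [Finset.mem_filter]
        have h5 := hW t (Nat.lt_succ_self t)
        refine ⟨Finset.mem_univ _, h5.1, fun j => ?_⟩
        rw [hZa t le_rfl]
        exact h5.2 j
    have hinjF : Set.InjOn (fun Φ : Formula n m k =>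
        (⟨Function.update Φ (seq t) c₀, Φ (seq t)⟩ :
          Σ _ : Formula n m k, (Fin k → Lit n)))
        (Finset.univ.filter (WFix S seq hk θ c₀ (t + 1))) := by
      intro Φ₁ h₁ Φ₂ h₂ hFeq
      have h1 : Function.update Φ₁ (seq t) c₀ = Function.update Φ₂ (seq t) c₀ :=
        congrArg Sigma.fst hFeq
      have h2 : Φ₁ (seq t) = Φ₂ (seq t) := congrArg Sigma.snd hFeq
      funext i
      by_cases hi : i = seq t
      · rw [hi]; exact h2
      · have e1 : Φ₁ i = Function.update Φ₁ (seq t) c₀ i :=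
          (Function.update_of_ne hi _ _).symm
        have e2 : Function.update Φ₂ (seq t) c₀ i = Φ₂ i :=
          Function.update_of_ne hi _ _
        rw [e1, h1, e2]
    calc (Finset.univ.filter (WFix S seq hk θ c₀ (t + 1))).card
        ≤ ((Finset.univ.filter (WFix S seq hk θ c₀ t)).sigma allowed).card :=
          Finset.card_le_card_of_injOn _ hmaps hinjF
      _ = ∑ Φ' ∈ Finset.univ.filter (WFix S seq hk θ c₀ t), (allowed Φ').card :=
          Finset.card_sigma _ _
      _ = ∑ Φ' ∈ Finset.univ.filter (WFix S seq hk θ c₀ t), (n - t) ^ k := by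
          refine Finset.sum_congr rfl (fun Φ' hΦ' => ?_)
          exact hcard_allowed Φ' ((Finset.mem_filter.1 hΦ').2).1
      _ = (Finset.univ.filter (WFix S seq hk θ c₀ t)).card * (n - t) ^ k := by
          rw [Finset.sum_const, smul_eq_mul]
      _ = (n - t) ^ k * (Finset.univ.filter (WFix S seq hk θ c₀ t)).card :=
          Nat.mul_comm _ _
  -- chaining
  have hchain : ∀ u, u ≤ θ → (Finset.univ.filter (WFix S seq hk θ c₀ u)).card ≤
      (∏ t ∈ Finset.range u, (n - t) ^ k) *
        (Finset.univ.filter (WFix S seq hk θ c₀ 0)).card := by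
    intro u
    induction u with
    | zero => intro _; simp
    | succ u ih =>
      intro hu
      calc (Finset.univ.filter (WFix S seq hk θ c₀ (u + 1))).card
          ≤ (n - u) ^ k * (Finset.univ.filter (WFix S seq hk θ c₀ u)).card :=
            hstep u (by omega)
        _ ≤ (n - u) ^ k * ((∏ t ∈ Finset.range u, (n - t) ^ k) *
              (Finset.univ.filter (WFix S seq hk θ c₀ 0)).card) :=
            Nat.mul_le_mul_left _ (ih (by omega))
        _ = (∏ t ∈ Finset.range (u + 1), (n - t) ^ k) *
              (Finset.univ.filter (WFix S seq hk θ c₀ 0)).card := by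
            rw [Finset.prod_range_succ]; ring
  have hWθ : (Finset.univ.filter (fun Φ : Formula n m k => Wt Φ S seq hk θ)) =
      Finset.univ.filter (WFix S seq hk θ c₀ θ) := by
    apply Finset.filter_congr
    intro Φ _
    constructor
    · intro h
      exact ⟨h, fun s h1 h2 => absurd h1 (by omega)⟩
    · intro h
      exact h.1
  rw [hWθ]
  calc (Finset.univ.filter (WFix S seq hk θ c₀ θ)).card
      ≤ (∏ t ∈ Finset.range θ, (n - t) ^ k) *
          (Finset.univ.filter (WFix S seq hk θ c₀ 0)).card := hchain θ le_rfl
    _ ≤ (∏ t ∈ Finset.range θ, (n - t) ^ k) *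
          (Fintype.card (Fin k → Lit n)) ^ (m - θ) :=
        Nat.mul_le_mul_left _ hbase


lemma card_SMfun {θ : ℕ} :
    ((Finset.univ : Finset (Fin θ → Fin m)).filter StrictMono).card = m.choose θ := by
  have h := Finset.card_bij
    (i := fun (e : Fin θ → Fin m) (_ : e ∈ (Finset.univ : Finset (Fin θ → Fin m)).filter
      StrictMono) => Finset.image e Finset.univ)
    (t := (Finset.univ : Finset (Fin m)).powersetCard θ)
    ?_ ?_ ?_
  · rw [h, Finset.card_powersetCard, Finset.card_univ, Fintype.card_fin]
  · intro e he
    have hmono : StrictMono e := (Finset.mem_filter.1 he).2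
    rw [Finset.mem_powersetCard]
    refine ⟨Finset.subset_univ _, ?_⟩
    rw [Finset.card_image_of_injective _ hmono.injective, Finset.card_univ,
      Fintype.card_fin]
  · intro e₁ he₁ e₂ he₂ heq
    have hm₁ : StrictMono e₁ := (Finset.mem_filter.1 he₁).2
    have hm₂ : StrictMono e₂ := (Finset.mem_filter.1 he₂).2
    have hc₁ : (Finset.image e₁ Finset.univ).card = θ := by
      rw [Finset.card_image_of_injective _ hm₁.injective, Finset.card_univ,
        Fintype.card_fin]
    have h₁ : e₁ = (Finset.image e₁ Finset.univ).orderEmbOfFin hc₁ :=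
      Finset.orderEmbOfFin_unique hc₁
        (fun x => Finset.mem_image_of_mem _ (Finset.mem_univ x)) hm₁
    have h₂ : e₂ = (Finset.image e₁ Finset.univ).orderEmbOfFin hc₁ :=
      Finset.orderEmbOfFin_unique hc₁
        (fun x => by
        have heq' : Finset.image e₁ Finset.univ = Finset.image e₂ Finset.univ := heq
        rw [heq']
        exact Finset.mem_image_of_mem _ (Finset.mem_univ x)) hm₂
    rw [h₁, h₂]
  · intro S hS
    rw [Finset.mem_powersetCard] at hS
    refine ⟨⇑(S.orderEmbOfFin hS.2), Finset.mem_filter.2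
      ⟨Finset.mem_univ _, (S.orderEmbOfFin hS.2).strictMono⟩, ?_⟩
    apply Finset.coe_inj.1
    rw [Finset.coe_image, Finset.coe_univ, Set.image_univ]
    exact Finset.range_orderEmbOfFin S hS.2

/-- The total count of formulas for which the process runs at least `θ` full steps. -/
lemma card_bad_le (hn : 0 < n) (hk : 0 < k) {θ : ℕ} (hθ : 0 < θ) :
    (Finset.univ.filter (fun Φ : Formula n m k =>
        ∀ t ≤ θ, (p1 Φ t).stopped = false)).card ≤
      m.choose θ * ((∏ t ∈ Finset.range θ, (n - t) ^ k) *
        (Fintype.card (Fin k → Lit n)) ^ (m - θ)) := by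
  set SM : Finset (Fin θ → Fin m) := Finset.univ.filter StrictMono with hSM
  have hsub : (Finset.univ.filter (fun Φ : Formula n m k =>
      ∀ t ≤ θ, (p1 Φ t).stopped = false)) ⊆
      SM.biUnion (fun e => Finset.univ.filter (fun Φ : Formula n m k =>
        Wt Φ (Finset.image e Finset.univ) (seqOf θ hθ e) hk θ)) := by
    intro Φ hΦ
    have hbad := (Finset.mem_filter.1 hΦ).2
    obtain ⟨e, hmono, hW⟩ := extract hk hθ hbad
    rw [Finset.mem_biUnion]
    exact ⟨e, Finset.mem_filter.2 ⟨Finset.mem_univ _, hmono⟩,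
      Finset.mem_filter.2 ⟨Finset.mem_univ _, hW⟩⟩
  calc (Finset.univ.filter (fun Φ : Formula n m k =>
        ∀ t ≤ θ, (p1 Φ t).stopped = false)).card
      ≤ (SM.biUnion (fun e => Finset.univ.filter (fun Φ : Formula n m k =>
          Wt Φ (Finset.image e Finset.univ) (seqOf θ hθ e) hk θ))).card :=
        Finset.card_le_card hsub
    _ ≤ ∑ e ∈ SM, (Finset.univ.filter (fun Φ : Formula n m k =>
          Wt Φ (Finset.image e Finset.univ) (seqOf θ hθ e) hk θ)).card :=
        Finset.card_biUnion_le
    _ ≤ ∑ _e ∈ SM, ((∏ t ∈ Finset.range θ, (n - t) ^ k) *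
          (Fintype.card (Fin k → Lit n)) ^ (m - θ)) := by
        refine Finset.sum_le_sum (fun e he => ?_)
        have hmono : StrictMono e := (Finset.mem_filter.1 he).2
        refine count_W hn hk _ _ (fun s hs => ?_) (fun s t hs ht hst => ?_)
        · rw [seqOf_eq hθ e hs]
          exact Finset.mem_image_of_mem _ (Finset.mem_univ _)
        · rw [seqOf_eq hθ e hs, seqOf_eq hθ e ht] at hst
          have := congrArg Fin.val (hmono.injective hst)
          exact this
    _ = SM.card * ((∏ t ∈ Finset.range θ, (n - t) ^ k) *
          (Fintype.card (Fin k → Lit n)) ^ (m - θ)) := by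
        rw [Finset.sum_const, smul_eq_mul]
    _ = m.choose θ * ((∏ t ∈ Finset.range θ, (n - t) ^ k) *
          (Fintype.card (Fin k → Lit n)) ^ (m - θ)) := by rw [hSM, card_SMfun]

/-- If the stopping time is at least `θ`, the process runs `θ` full steps. -/
lemma run_of_TT_ge {Φ : Formula n m k} {θ : ℕ} (h : θ ≤ TT Φ) :
    ∀ t ≤ θ, (p1 Φ t).stopped = false := by
  intro t ht
  by_contra hc
  rw [Bool.not_eq_false] at hc
  cases t with
  | zero => exact Bool.false_ne_true hc
  | succ u =>
    have hmem : u ∈ {t | (p1 Φ (t + 1)).stopped = true} := hc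
    have : TT Φ ≤ u := Nat.sInf_le hmem
    omega


lemma cardD_eq (n k : ℕ) : Fintype.card (Fin k → Lit n) = (2 * n) ^ k := by
  rw [Fintype.card_fun, Fintype.card_prod, Fintype.card_fin, Fintype.card_bool,
    Fintype.card_fin, mul_comm]

lemma cardFormula_eq (n m k : ℕ) : Fintype.card (Formula n m k) = ((2 * n) ^ k) ^ m := by
  rw [Fintype.card_fun, cardD_eq, Fintype.card_fin]

lemma choose_le_bound (m θ : ℕ) (hθ : 0 < θ) :
    (m.choose θ : ℝ) ≤ (Real.exp 1 * m / θ) ^ θ := by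
  have h1 : (m.choose θ : ℝ) ≤ (m : ℝ) ^ θ / θ.factorial := Nat.choose_le_pow_div θ m
  have hθR : (0 : ℝ) < θ := by exact_mod_cast hθ
  have h2 : (θ : ℝ) ^ θ / θ.factorial ≤ Real.exp θ :=
    Real.pow_div_factorial_le_exp (x := (θ : ℝ)) (le_of_lt hθR) θ
  have hfact : (0 : ℝ) < θ.factorial := by
    exact_mod_cast θ.factorial_pos
  have h3 : (Real.exp 1 * m / θ) ^ θ = Real.exp θ * (m : ℝ) ^ θ / (θ : ℝ) ^ θ := by
    rw [div_pow, mul_pow, Real.exp_one_pow]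
  rw [h3]
  refine le_trans h1 ?_
  rw [div_le_div_iff₀ hfact (by positivity)]
  have h4 : (θ : ℝ) ^ θ ≤ Real.exp θ * θ.factorial := (div_le_iff₀ hfact).1 h2
  have h5 : (0 : ℝ) ≤ (m : ℝ) ^ θ := by positivity
  nlinarith

lemma prod_bound (n k θ : ℕ) (hn : 0 < n) :
    (∏ t ∈ Finset.range θ, ((n - t : ℕ) : ℝ) ^ k) ≤
      (n : ℝ) ^ (k * θ) *
        Real.exp (-(k : ℝ) * (∑ t ∈ Finset.range θ, (t : ℝ)) / n) := by
  have hnR : (0 : ℝ) < n := by exact_mod_cast hn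
  have hfac : ∀ t : ℕ, ((n - t : ℕ) : ℝ) ^ k ≤ ((n : ℝ) * Real.exp (-(t : ℝ) / n)) ^ k := by
    intro t
    refine pow_le_pow_left₀ (by positivity) ?_ k
    by_cases htn : t ≤ n
    · have hcast : ((n - t : ℕ) : ℝ) = (n : ℝ) - t := by
        push_cast [htn]
        ring
      rw [hcast]
      have h1 : -(t : ℝ) / n + 1 ≤ Real.exp (-(t : ℝ) / n) := Real.add_one_le_exp _
      calc (n : ℝ) - t = n * (-(t : ℝ) / n + 1) := by field_simp; ring
        _ ≤ n * Real.exp (-(t : ℝ) / n) := by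
            exact mul_le_mul_of_nonneg_left h1 (le_of_lt hnR)
    · have h0 : n - t = 0 := by omega
      rw [h0]
      push_cast
      positivity
  calc (∏ t ∈ Finset.range θ, ((n - t : ℕ) : ℝ) ^ k)
      ≤ ∏ t ∈ Finset.range θ, ((n : ℝ) * Real.exp (-(t : ℝ) / n)) ^ k :=
        Finset.prod_le_prod (fun t _ => by positivity) (fun t _ => hfac t)
    _ = ((n : ℝ) ^ k) ^ θ * ∏ t ∈ Finset.range θ, Real.exp ((k : ℝ) * (-(t : ℝ) / n)) := by
        simp only [mul_pow, ← Real.exp_nat_mul]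
        rw [Finset.prod_mul_distrib, Finset.prod_const, Finset.card_range]
    _ = (n : ℝ) ^ (k * θ) *
          Real.exp (∑ t ∈ Finset.range θ, (k : ℝ) * (-(t : ℝ) / n)) := by
        rw [← pow_mul, Real.exp_sum]
    _ = (n : ℝ) ^ (k * θ) *
          Real.exp (-(k : ℝ) * (∑ t ∈ Finset.range θ, (t : ℝ)) / n) := by
        congr 1
        have h6 : ∀ t : ℕ, (k : ℝ) * (-(t : ℝ) / n) = -(k : ℝ) * (t : ℝ) / n :=
          fun t => by ring
        rw [Finset.sum_congr rfl (fun t _ => h6 t), ← Finset.sum_div, ← Finset.mul_sum]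


lemma Pr_compl {n m k : ℕ} (hn : 0 < n) (A : Set (Formula n m k)) :
    Pr n m k A = 1 - ((Finset.univ.filter (fun Φ : Formula n m k => Φ ∉ A)).card : ℝ) /
      ((Finset.univ : Finset (Formula n m k)).card : ℝ) := by
  have hpos : 0 < (Finset.univ : Finset (Formula n m k)).card := by
    rw [Finset.card_univ, cardFormula_eq]
    exact pow_pos (pow_pos (by omega) k) m
  have hposR : (0 : ℝ) < ((Finset.univ : Finset (Formula n m k)).card : ℝ) := by
    exact_mod_cast hpos
  have h := Finset.card_filter_add_card_filter_not
    (s := (Finset.univ : Finset (Formula n m k))) (p := fun Φ => Φ ∈ A)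
  have hcast : ((Finset.univ.filter (fun Φ : Formula n m k => Φ ∈ A)).card : ℝ)
      = ((Finset.univ : Finset (Formula n m k)).card : ℝ) -
        ((Finset.univ.filter (fun Φ : Formula n m k => ¬ Φ ∈ A)).card : ℝ) := by
    have h2 : ((Finset.univ.filter (fun Φ : Formula n m k => Φ ∈ A)).card : ℝ) +
        ((Finset.univ.filter (fun Φ : Formula n m k => ¬ Φ ∈ A)).card : ℝ) =
        ((Finset.univ : Finset (Formula n m k)).card : ℝ) := by
      exact_mod_cast h
    linarith
  unfold Pr
  rw [hcast, sub_div, div_self (ne_of_gt hposR)]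

end Aux11

set_option maxHeartbeats 2000000 in
/-- Corollary 4.  Whp `T < 4nk⁻¹ ln ω`. -/
theorem statement11 (ε : ℝ) (hε0 : 0 < ε) (hε1 : ε < 0.1) :
    ∃ k₀ : ℕ, ∀ k : ℕ, k₀ ≤ k →
    Tendsto (fun n : ℕ => Pr n (mOf ε k n) k {Φ : Formula n (mOf ε k n) k |
      (TT Φ : ℝ) < 4 * n / k * Real.log (omOf ε k)}) atTop (nhds 1) := by
  refine ⟨max 2 (⌈Real.exp (Real.exp 3 / (1 - ε))⌉₊ + 1), fun k hkk => ?_⟩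
  have hk2 : 2 ≤ k := le_trans (le_max_left _ _) hkk
  have hk0 : 0 < k := by omega
  have hkR : (0 : ℝ) < k := by exact_mod_cast hk0
  have h1ε : (0 : ℝ) < 1 - ε := by norm_num at hε1 ⊢; linarith
  have hkexp : Real.exp (Real.exp 3 / (1 - ε)) ≤ (k : ℝ) := by
    have h1 : ⌈Real.exp (Real.exp 3 / (1 - ε))⌉₊ ≤ k :=
      le_trans (by omega) (le_trans (le_max_right _ _) hkk)
    calc Real.exp (Real.exp 3 / (1 - ε)) ≤ (⌈Real.exp (Real.exp 3 / (1 - ε))⌉₊ : ℝ) :=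
          Nat.le_ceil _
      _ ≤ (k : ℝ) := by exact_mod_cast h1
  set ω := omOf ε k with hωdef
  have hω : Real.exp 3 ≤ ω := by
    rw [hωdef, omOf]
    have hlog : Real.exp 3 / (1 - ε) ≤ Real.log k :=
      (Real.le_log_iff_exp_le hkR).2 hkexp
    calc Real.exp 3 = (1 - ε) * (Real.exp 3 / (1 - ε)) := by field_simp
      _ ≤ (1 - ε) * Real.log k := mul_le_mul_of_nonneg_left hlog (le_of_lt h1ε)
  have hωpos : (0 : ℝ) < ω := lt_of_lt_of_le (Real.exp_pos 3) hω
  have hω4 : (4 : ℝ) ≤ ω := by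
    have := Real.add_one_le_exp (3 : ℝ)
    linarith
  set L := Real.log ω with hLdef
  have hL3 : (3 : ℝ) ≤ L := by
    rw [hLdef]
    calc (3 : ℝ) = Real.log (Real.exp 3) := (Real.log_exp 3).symm
      _ ≤ Real.log ω := Real.log_le_log (Real.exp_pos 3) hω
  have hLpos : (0 : ℝ) < L := by linarith
  have hexpL : Real.exp L = ω := Real.exp_log hωpos
  -- the key per-`n` estimate
  have key : ∀ n : ℕ, 1 ≤ n →
      1 - Real.exp (2 * L) * (1 / 2 : ℝ) ^ (⌈4 * (n : ℝ) / (k : ℝ) * L⌉₊) ≤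
        Pr n (mOf ε k n) k {Φ : Formula n (mOf ε k n) k |
          (TT Φ : ℝ) < 4 * (n : ℝ) / (k : ℝ) * L} ∧
      Pr n (mOf ε k n) k {Φ : Formula n (mOf ε k n) k |
          (TT Φ : ℝ) < 4 * (n : ℝ) / (k : ℝ) * L} ≤ 1 := by
    intro n hn1
    have hn0 : 0 < n := hn1
    have hnR : (0 : ℝ) < n := by exact_mod_cast hn0
    set m' := mOf ε k n with hm'def
    set c := 4 * (n : ℝ) / (k : ℝ) * L with hcdef
    have hcpos : 0 < c := by rw [hcdef]; positivity
    set θ := ⌈c⌉₊ with hθdef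
    have hθ0 : 0 < θ := Nat.ceil_pos.2 hcpos
    have hθc : c ≤ (θ : ℝ) := Nat.le_ceil c
    have hθR : (0 : ℝ) < θ := by exact_mod_cast hθ0
    have hθ1R : (1 : ℝ) ≤ θ := by exact_mod_cast hθ0
    set A : Set (Formula n m' k) := {Φ : Formula n m' k | (TT Φ : ℝ) < c} with hAdef
    have hPr := Pr_compl (n := n) (m := m') (k := k) hn0 A
    set q := ((Finset.univ.filter (fun Φ : Formula n m' k => Φ ∉ A)).card : ℝ) /
        ((Finset.univ : Finset (Formula n m' k)).card : ℝ) with hqdef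
    have hq0 : (0 : ℝ) ≤ q := by rw [hqdef]; positivity
    -- the bad set is contained in the long-run set
    have hsub : (Finset.univ.filter (fun Φ : Formula n m' k => Φ ∉ A)) ⊆
        (Finset.univ.filter (fun Φ : Formula n m' k =>
          ∀ t ≤ θ, (p1 Φ t).stopped = false)) := by
      intro Φ hΦ
      rw [Finset.mem_filter] at hΦ ⊢
      refine ⟨Finset.mem_univ _, ?_⟩
      have hnlt : ¬ ((TT Φ : ℝ) < c) := fun hlt => hΦ.2 hlt
      exact run_of_TT_ge (Nat.ceil_le.2 (not_lt.1 hnlt))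
    have hbadle : ((Finset.univ.filter (fun Φ : Formula n m' k => Φ ∉ A)).card) ≤
        m'.choose θ * ((∏ t ∈ Finset.range θ, (n - t) ^ k) *
          (Fintype.card (Fin k → Lit n)) ^ (m' - θ)) :=
      le_trans (Finset.card_le_card hsub) (card_bad_le hn0 hk0 hθ0)
    -- real quantities
    have ha : ((Finset.univ : Finset (Formula n m' k)).card : ℝ) =
        ((2 * (n : ℝ)) ^ k) ^ m' := by
      rw [Finset.card_univ, cardFormula_eq]
      push_cast
      ring
    have hapos : (0 : ℝ) < (2 * (n : ℝ)) ^ k := by positivity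
    set P := ∏ t ∈ Finset.range θ, ((n - t : ℕ) : ℝ) ^ k with hPdef
    have hP0 : (0 : ℝ) ≤ P := Finset.prod_nonneg (fun t _ => by positivity)
    have hbadR : ((Finset.univ.filter (fun Φ : Formula n m' k => Φ ∉ A)).card : ℝ) ≤
        (m'.choose θ : ℝ) * (P * ((2 * (n : ℝ)) ^ k) ^ (m' - θ)) := by
      have h1 := hbadle
      rw [cardD_eq] at h1
      calc ((Finset.univ.filter (fun Φ : Formula n m' k => Φ ∉ A)).card : ℝ)
          ≤ ((m'.choose θ * ((∏ t ∈ Finset.range θ, (n - t) ^ k) *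
              ((2 * n) ^ k) ^ (m' - θ)) : ℕ) : ℝ) := by exact_mod_cast h1
        _ = (m'.choose θ : ℝ) * (P * ((2 * (n : ℝ)) ^ k) ^ (m' - θ)) := by
            rw [hPdef]
            push_cast
            ring
    -- numeric ingredients
    have hm'le : (m' : ℝ) ≤ ω * 2 ^ k * n / k := by
      rw [hm'def, mOf]
      have hlogk : (0 : ℝ) ≤ Real.log k := Real.log_nonneg (by exact_mod_cast hk0)
      have harg : (0 : ℝ) ≤ (1 - ε) * 2 ^ k * Real.log k / k * n := by
        apply mul_nonneg _ hnR.le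
        apply div_nonneg _ hkR.le
        exact mul_nonneg (mul_nonneg h1ε.le (by positivity)) hlogk
      calc ((⌊(1 - ε) * 2 ^ k * Real.log k / k * n⌋₊ : ℕ) : ℝ)
          ≤ (1 - ε) * 2 ^ k * Real.log k / k * n := Nat.floor_le harg
        _ = ω * 2 ^ k * n / k := by rw [hωdef, omOf]; ring
    have hGauss : (∑ t ∈ Finset.range θ, (t : ℝ)) = (θ : ℝ) * ((θ : ℝ) - 1) / 2 := by
      have h := Finset.sum_range_id_mul_two θ
      have h2 := congrArg (fun x : ℕ => (x : ℝ)) h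
      push_cast [Nat.cast_sub (show 1 ≤ θ by omega)] at h2
      linarith
    have hkθ : 4 * (n : ℝ) * L ≤ (k : ℝ) * θ := by
      have h1 : c * k ≤ θ * k := mul_le_mul_of_nonneg_right hθc hkR.le
      have h2 : c * k = 4 * (n : ℝ) * L := by rw [hcdef]; field_simp
      linarith [h1, h2.symm.le]
    have hbase1 : Real.exp 1 * m' / θ / 2 ^ k ≤ Real.exp 1 * ω / (4 * L) := by
      have h1 : Real.exp 1 * m' / θ / 2 ^ k ≤
          Real.exp 1 * (ω * 2 ^ k * n / k) / θ / 2 ^ k := by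
        gcongr
      have h2 : Real.exp 1 * (ω * 2 ^ k * n / k) / θ / 2 ^ k =
          Real.exp 1 * ω * ((n : ℝ) / ((k : ℝ) * θ)) := by
        field_simp
      have h3 : (n : ℝ) / ((k : ℝ) * θ) ≤ 1 / (4 * L) := by
        rw [div_le_div_iff₀ (by positivity) (by positivity)]
        nlinarith [hkθ]
      calc Real.exp 1 * m' / θ / 2 ^ k
          ≤ Real.exp 1 * (ω * 2 ^ k * n / k) / θ / 2 ^ k := h1
        _ = Real.exp 1 * ω * ((n : ℝ) / ((k : ℝ) * θ)) := h2
        _ ≤ Real.exp 1 * ω * (1 / (4 * L)) := by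
            exact mul_le_mul_of_nonneg_left h3 (by positivity)
        _ = Real.exp 1 * ω / (4 * L) := by ring
    have hbase2 : Real.exp 1 * ω / (4 * L) * Real.exp (-(2 * L)) ≤ 1 / 2 := by
      have hexp2L : Real.exp (-(2 * L)) = 1 / (ω * ω) := by
        rw [show (2 : ℝ) * L = L + L by ring, Real.exp_neg, Real.exp_add, hexpL]
        rw [one_div]
      rw [hexp2L]
      have he1 : Real.exp 1 ≤ 3 := by
        have := Real.exp_one_lt_d9
        linarith
      have heq : Real.exp 1 * ω / (4 * L) * (1 / (ω * ω)) = Real.exp 1 / (4 * L * ω) := by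
        field_simp
      rw [heq, div_le_iff₀ (by positivity)]
      nlinarith
    have hexpθ : Real.exp (-(k : ℝ) * (∑ t ∈ Finset.range θ, (t : ℝ)) / n) ≤
        Real.exp (-(2 * L) * ((θ : ℝ) - 1)) := by
      rw [Real.exp_le_exp, hGauss, div_le_iff₀ hnR]
      nlinarith [mul_nonneg (sub_nonneg.2 hkθ) (sub_nonneg.2 hθ1R)]
    -- the master chain
    have hRfinal : (m'.choose θ : ℝ) * P / ((2 * (n : ℝ)) ^ k) ^ θ ≤
        Real.exp (2 * L) * (1 / 2 : ℝ) ^ θ := by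
      have hchoose := choose_le_bound m' θ hθ0
      have hprod := prod_bound n k θ hn0
      have h1 : (m'.choose θ : ℝ) * P ≤ (Real.exp 1 * m' / θ) ^ θ *
          ((n : ℝ) ^ (k * θ) *
            Real.exp (-(k : ℝ) * (∑ t ∈ Finset.range θ, (t : ℝ)) / n)) :=
        mul_le_mul hchoose hprod hP0 (by positivity)
      have h2 : (m'.choose θ : ℝ) * P / ((2 * (n : ℝ)) ^ k) ^ θ ≤
          ((Real.exp 1 * m' / θ) ^ θ * ((n : ℝ) ^ (k * θ) *
            Real.exp (-(k : ℝ) * (∑ t ∈ Finset.range θ, (t : ℝ)) / n))) /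
            ((2 * (n : ℝ)) ^ k) ^ θ := by
        exact (div_le_div_iff_of_pos_right (by positivity)).2 h1
      have h3 : ((Real.exp 1 * m' / θ) ^ θ * ((n : ℝ) ^ (k * θ) *
          Real.exp (-(k : ℝ) * (∑ t ∈ Finset.range θ, (t : ℝ)) / n))) /
          ((2 * (n : ℝ)) ^ k) ^ θ =
          (Real.exp 1 * m' / θ / 2 ^ k) ^ θ *
            Real.exp (-(k : ℝ) * (∑ t ∈ Finset.range θ, (t : ℝ)) / n) := by
        rw [mul_pow (2 : ℝ) (n : ℝ) k, mul_pow ((2 : ℝ) ^ k) ((n : ℝ) ^ k) θ,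
          ← pow_mul (n : ℝ) k θ, div_pow]
        field_simp
        have hθθ : (θ : ℝ) ^ θ * (θ : ℝ)⁻¹ ^ θ = 1 := by
          rw [← mul_pow, mul_inv_cancel₀ hθR.ne', one_pow]
        have h22 : (2 : ℝ)⁻¹ ^ (θ * k) * 2 ^ (θ * k) = 1 := by
          rw [← mul_pow, inv_mul_cancel₀ two_ne_zero, one_pow]
        ring_nf
        rw [mul_assoc (Real.exp 1 ^ θ * (m' : ℝ) ^ θ), hθθ, mul_one,
          mul_assoc (Real.exp 1 ^ θ * (m' : ℝ) ^ θ), h22, mul_one]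
      have h4 : (Real.exp 1 * m' / θ / 2 ^ k) ^ θ ≤ (Real.exp 1 * ω / (4 * L)) ^ θ :=
        pow_le_pow_left₀ (by positivity) hbase1 θ
      have h5 : (Real.exp 1 * m' / θ / 2 ^ k) ^ θ *
          Real.exp (-(k : ℝ) * (∑ t ∈ Finset.range θ, (t : ℝ)) / n) ≤
          (Real.exp 1 * ω / (4 * L)) ^ θ * Real.exp (-(2 * L) * ((θ : ℝ) - 1)) :=
        mul_le_mul h4 hexpθ (Real.exp_pos _).le (by positivity)
      have h6 : (Real.exp 1 * ω / (4 * L)) ^ θ * Real.exp (-(2 * L) * ((θ : ℝ) - 1)) =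
          Real.exp (2 * L) * ((Real.exp 1 * ω / (4 * L)) * Real.exp (-(2 * L))) ^ θ := by
        have harg : -(2 * L) * ((θ : ℝ) - 1) = 2 * L + (θ : ℕ) * (-(2 * L)) := by
          push_cast
          ring
        rw [harg, Real.exp_add, Real.exp_nat_mul, mul_pow]
        ring
      have h7 : ((Real.exp 1 * ω / (4 * L)) * Real.exp (-(2 * L))) ^ θ ≤ (1 / 2 : ℝ) ^ θ :=
        pow_le_pow_left₀ (by positivity) hbase2 θ
      calc (m'.choose θ : ℝ) * P / ((2 * (n : ℝ)) ^ k) ^ θ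
          ≤ ((Real.exp 1 * m' / θ) ^ θ * ((n : ℝ) ^ (k * θ) *
              Real.exp (-(k : ℝ) * (∑ t ∈ Finset.range θ, (t : ℝ)) / n))) /
              ((2 * (n : ℝ)) ^ k) ^ θ := h2
        _ = (Real.exp 1 * m' / θ / 2 ^ k) ^ θ *
              Real.exp (-(k : ℝ) * (∑ t ∈ Finset.range θ, (t : ℝ)) / n) := h3
        _ ≤ (Real.exp 1 * ω / (4 * L)) ^ θ * Real.exp (-(2 * L) * ((θ : ℝ) - 1)) := h5
        _ = Real.exp (2 * L) * ((Real.exp 1 * ω / (4 * L)) * Real.exp (-(2 * L))) ^ θ := h6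
        _ ≤ Real.exp (2 * L) * (1 / 2 : ℝ) ^ θ :=
            mul_le_mul_of_nonneg_left h7 (Real.exp_pos _).le
    -- bounding `q`
    have hqR : q ≤ Real.exp (2 * L) * (1 / 2 : ℝ) ^ θ := by
      by_cases hθm : θ ≤ m'
      · have hq1 : q ≤ (m'.choose θ : ℝ) * P / ((2 * (n : ℝ)) ^ k) ^ θ := by
          rw [hqdef, ha, div_le_div_iff₀ (by positivity) (by positivity)]
          have hsubpow : ((2 * (n : ℝ)) ^ k) ^ (m' - θ) =
              ((2 * (n : ℝ)) ^ k) ^ m' * (((2 * (n : ℝ)) ^ k) ^ θ)⁻¹ :=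
            pow_sub₀ _ (ne_of_gt hapos) hθm
          calc ((Finset.univ.filter (fun Φ : Formula n m' k => Φ ∉ A)).card : ℝ) *
                ((2 * (n : ℝ)) ^ k) ^ θ
              ≤ ((m'.choose θ : ℝ) * (P * ((2 * (n : ℝ)) ^ k) ^ (m' - θ))) *
                ((2 * (n : ℝ)) ^ k) ^ θ :=
                mul_le_mul_of_nonneg_right hbadR (by positivity)
            _ = (m'.choose θ : ℝ) * P * (((2 * (n : ℝ)) ^ k) ^ m') := by
                rw [hsubpow]
                field_simp
        exact le_trans hq1 hRfinal
      · have hch0 : m'.choose θ = 0 := Nat.choose_eq_zero_of_lt (by omega)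
        rw [hch0, Nat.zero_mul] at hbadle
        have hc0 : (Finset.univ.filter (fun Φ : Formula n m' k => Φ ∉ A)).card = 0 :=
          Nat.le_zero.1 hbadle
        rw [hqdef, hc0]
        norm_num
        positivity
    exact ⟨by rw [hPr]; linarith, by rw [hPr]; linarith⟩
  -- conclude by squeezing
  have hθtend : Tendsto (fun n : ℕ => (⌈4 * (n : ℝ) / (k : ℝ) * L⌉₊ : ℕ)) atTop atTop := by
    rw [tendsto_atTop_atTop]
    intro b
    refine ⟨b * k + 1, fun n hn => ?_⟩
    have hnbk : (b : ℝ) * k ≤ n := by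
      have h0 : b * k ≤ n := by omega
      exact_mod_cast h0
    have h1 : (b : ℝ) ≤ 4 * (n : ℝ) / k * L := by
      have hbk : (b : ℝ) ≤ (n : ℝ) / k := by
        rw [le_div_iff₀ hkR]
        linarith
      have hnk : (0 : ℝ) ≤ (n : ℝ) / k := by positivity
      rw [show 4 * (n : ℝ) / k * L = 4 * L * ((n : ℝ) / k) from by ring]
      nlinarith [hbk, hnk, hL3]
    have h2 : ((b : ℕ) : ℝ) ≤ (⌈4 * (n : ℝ) / k * L⌉₊ : ℝ) := le_trans h1 (Nat.le_ceil _)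
    exact_mod_cast h2
  have hpowtend : Tendsto (fun n : ℕ => Real.exp (2 * L) *
      (1 / 2 : ℝ) ^ (⌈4 * (n : ℝ) / (k : ℝ) * L⌉₊)) atTop (nhds 0) := by
    have h2 : Tendsto (fun j : ℕ => (1 / 2 : ℝ) ^ j) atTop (nhds 0) :=
      tendsto_pow_atTop_nhds_zero_of_lt_one (by norm_num) (by norm_num)
    have h3 := (h2.comp hθtend).const_mul (Real.exp (2 * L))
    simpa using h3
  have hlow : Tendsto (fun n : ℕ => 1 - Real.exp (2 * L) *
      (1 / 2 : ℝ) ^ (⌈4 * (n : ℝ) / (k : ℝ) * L⌉₊)) atTop (nhds 1) := by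
    have h4 := (tendsto_const_nhds (x := (1 : ℝ)) (f := (atTop : Filter ℕ))).sub hpowtend
    simpa using h4
  refine tendsto_of_tendsto_of_tendsto_of_le_of_le' hlow tendsto_const_nhds ?_ ?_
  · filter_upwards [eventually_ge_atTop 1] with n hn1
    exact (key n hn1).1
  · filter_upwards [eventually_ge_atTop 1] with n hn1
    exact (key n hn1).2

end RandomKSAT
end

section
/- Whp the Phase-1 process applied to the random formula Φ satisfies max_{0≤t≤T} |𝒰_t| ≤ (1+ε/3)·ω·n. -/
open Finset MeasureTheory Filter
open scoped ENNReal

attribute [local instance] Classical.propDecidable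

namespace RandomKSAT

variable {n m k : ℕ}

/-- Structural case analysis for `p1step`. -/
lemma p1step_eq (Φ : Formula n m k) (s : P1State n m k) :
    ((p1step Φ s).Z = s.Z ∧ (p1step Φ s).pi = s.pi) ∨
    ∃ φt : Fin m, ∃ z : Fin n, allNeg Φ φt ∧
      (p1step Φ s).Z = insert z s.Z ∧
      ∀ i j, (p1step Φ s).pi i j =
        if (i = φt ∧ j.val < k1 k) ∨ (Φ i j).1 ∈ insert z s.Z ∨
           (i ∈ Uset Φ (insert z s.Z) ∧ pi0 Φ i j = Sum.inl true)
        then Sum.inr (Φ i j) else s.pi i j := by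
  by_cases hs : s.stopped
  · left; simp [p1step, hs]
  · by_cases hE : (Finset.univ.filter (fun i : Fin m => allNeg Φ i ∧ ∀ j, (Φ i j).1 ∉ s.Z)).Nonempty
    · by_cases hk : 0 < k
      · right
        set E := Finset.univ.filter (fun i : Fin m => allNeg Φ i ∧ ∀ j, (Φ i j).1 ∉ s.Z) with hEdef
        set φt := E.min' hE with hφ
        set J := Finset.univ.filter
          (fun j : Fin k => j.val + 1 < k1 k ∧ Ux Φ s.Z ((Φ φt j).1) = 0) with hJdef
        set jsel : Fin k :=
          (if hJ : J.Nonempty then J.min' hJ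
          else ⟨min (k1 k - 1) (k - 1), by
            have h1 := Nat.min_le_right (k1 k - 1) (k - 1); omega⟩) with hjsel
        refine ⟨φt, (Φ φt jsel).1, ?_, ?_, ?_⟩
        · have := Finset.min'_mem _ hE
          simp only [hEdef, Finset.mem_filter] at this
          exact this.2.1
        · unfold p1step; rw [if_neg hs, dif_pos hE, dif_pos hk]
        · intro i j; unfold p1step; rw [if_neg hs, dif_pos hE, dif_pos hk]
      · left; simp [p1step, hs, hE, hk]
    · left; simp [p1step, hs, hE]
/-- The dominating set `W Φ Z`. -/
noncomputable def W (Φ : Formula n m k) (Z : Finset (Fin n)) : Finset (Fin m) :=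
  Finset.univ.filter (fun i =>
    (∃ j, (Φ i j).2 = true) ∧
    (Finset.univ.filter (fun j => (Φ i j).2 = true ∧ (Φ i j).1 ∉ Z)).card ≤ 1 ∧
    ∀ j, (Φ i j).2 = false → (Φ i j).1 ∉ Z)

lemma Z_mono_step (Φ : Formula n m k) (s : P1State n m k) : s.Z ⊆ (p1step Φ s).Z := by
  rcases p1step_eq Φ s with ⟨h1, _⟩ | ⟨φt, z, _, h1, _⟩
  · rw [h1]
  · rw [h1]; exact Finset.subset_insert _ _

lemma pi_dichot (Φ : Formula n m k) (t : ℕ) (i : Fin m) (j : Fin k) :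
    (p1 Φ t).pi i j = pi0 Φ i j ∨ (p1 Φ t).pi i j = Sum.inr (Φ i j) := by
  induction t with
  | zero => left; rfl
  | succ t ih =>
    have hstep : p1 Φ (t+1) = p1step Φ (p1 Φ t) := rfl
    rw [hstep]
    rcases p1step_eq Φ (p1 Φ t) with ⟨_, h2⟩ | ⟨φt, z, _, _, h2⟩
    · rw [h2]; exact ih
    · rw [h2 i j]
      split
      · right; rfl
      · exact ih

lemma revealZ (Φ : Formula n m k) (t : ℕ) (i : Fin m) (j : Fin k)
    (h : (Φ i j).1 ∈ (p1 Φ t).Z) : (p1 Φ t).pi i j = Sum.inr (Φ i j) := by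
  induction t with
  | zero => simp [p1] at h
  | succ t ih =>
    have hstep : p1 Φ (t+1) = p1step Φ (p1 Φ t) := rfl
    rw [hstep] at h ⊢
    rcases p1step_eq Φ (p1 Φ t) with ⟨h1, h2⟩ | ⟨φt, z, _, h1, h2⟩
    · rw [h2]
      exact ih (by rwa [h1] at h)
    · rw [h2 i j, if_pos]
      right; left
      rwa [h1] at h

lemma invD (Φ : Formula n m k) (t : ℕ) (i : Fin m) :
    (Finset.univ.filter (fun j => (p1 Φ t).pi i j = Sum.inr (Φ i j) ∧
      (Φ i j).2 = true ∧ (Φ i j).1 ∉ (p1 Φ t).Z)).card ≤ 1 := by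
  induction t with
  | zero =>
    by_cases hU : i ∈ Uset Φ ∅
    · have hcard : (Finset.univ.filter (fun j => (Φ i j).2 = true ∧ (Φ i j).1 ∉ (∅ : Finset (Fin n)))).card = 1 := by
        have := (Finset.mem_filter.mp hU).2.1
        exact this
      calc _ ≤ (Finset.univ.filter (fun j => (Φ i j).2 = true ∧ (Φ i j).1 ∉ (∅ : Finset (Fin n)))).card := by
              apply Finset.card_le_card
              intro j hj
              simp only [Finset.mem_filter] at hj ⊢
              exact ⟨hj.1, hj.2.2⟩
           _ ≤ 1 := le_of_eq hcard
    · have : (Finset.univ.filter (fun j => (p1 Φ 0).pi i j = Sum.inr (Φ i j) ∧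
        (Φ i j).2 = true ∧ (Φ i j).1 ∉ (p1 Φ 0).Z)) = ∅ := by
        apply Finset.filter_eq_empty_iff.mpr
        intro j _
        intro hcon
        have h0 : (p1 Φ 0).pi i j = pi0 Φ i j := rfl
        rw [h0] at hcon
        unfold pi0 at hcon
        rw [if_neg (by tauto)] at hcon
        exact absurd hcon.1 (by simp)
      rw [this]; simp
  | succ t ih =>
    have hstep : p1 Φ (t+1) = p1step Φ (p1 Φ t) := rfl
    rw [hstep]
    rcases p1step_eq Φ (p1 Φ t) with ⟨h1, h2⟩ | ⟨φt, z, hneg, h1, h2⟩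
    · have hZ : (p1step Φ (p1 Φ t)).Z = (p1 Φ t).Z := h1
      have hpi : (p1step Φ (p1 Φ t)).pi = (p1 Φ t).pi := h2
      rw [hZ, hpi]; exact ih
    · have hZ : (p1step Φ (p1 Φ t)).Z = insert z (p1 Φ t).Z := h1
      by_cases hU : i ∈ Uset Φ (insert z (p1 Φ t).Z)
      · have hcard : (Finset.univ.filter (fun j => (Φ i j).2 = true ∧
          (Φ i j).1 ∉ insert z (p1 Φ t).Z)).card = 1 := (Finset.mem_filter.mp hU).2.1
        calc _ ≤ (Finset.univ.filter (fun j => (Φ i j).2 = true ∧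
              (Φ i j).1 ∉ insert z (p1 Φ t).Z)).card := by
              apply Finset.card_le_card
              intro j hj
              rw [Finset.mem_filter] at hj ⊢
              rw [hZ] at hj
              exact ⟨hj.1, hj.2.2⟩
           _ ≤ 1 := le_of_eq hcard
      · refine le_trans (Finset.card_le_card ?_) ih
        intro j hj
        rw [Finset.mem_filter] at hj ⊢
        obtain ⟨-, hrev, hpos, hout⟩ := hj
        rw [hZ] at hout
        have hpi : (p1step Φ (p1 Φ t)).pi i j = _ := h2 i j
        rw [hpi] at hrev
        have hnc : ¬ ((i = φt ∧ j.val < k1 k) ∨ (Φ i j).1 ∈ insert z (p1 Φ t).Z ∨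
            (i ∈ Uset Φ (insert z (p1 Φ t).Z) ∧ pi0 Φ i j = Sum.inl true)) := by
          rintro (⟨rfl, -⟩ | hin | hu)
          · exact absurd (hneg j) (by simp [hpos])
          · exact hout hin
          · exact hU hu.1
        rw [if_neg hnc] at hrev
        exact ⟨Finset.mem_univ j, hrev, hpos, fun hc => hout (Finset.mem_insert_of_mem hc)⟩

/-- Deterministic inclusion: `𝒰_t ⊆ W Φ Z_t`. -/
lemma detIncl (Φ : Formula n m k) (t : ℕ) : curlyU Φ t ⊆ W Φ ((p1 Φ t).Z) := by
  intro i hi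
  rw [curlyU, Finset.mem_filter] at hi
  obtain ⟨-, ⟨j0, hj0⟩, h2⟩ := hi
  push_neg at h2
  -- every positive position is revealed
  have hrev : ∀ j, (Φ i j).2 = true → (p1 Φ t).pi i j = Sum.inr (Φ i j) := by
    intro j hpos
    rcases pi_dichot Φ t i j with h | h
    · rw [h]
      unfold pi0
      split
      · rfl
      · exfalso
        have := (h2 j).1
        rw [h] at this
        unfold pi0 at this
        rw [if_neg (by assumption)] at this
        rw [hpos] at this
        exact this rfl
    · exact h
  rw [W, Finset.mem_filter]
  refine ⟨Finset.mem_univ i, ?_, ?_, ?_⟩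
  · -- ∃ positive
    refine ⟨j0, ?_⟩
    by_contra hneg
    have hfalse : (Φ i j0).2 = false := by
      cases h : (Φ i j0).2
      · rfl
      · exact absurd h hneg
    apply hj0
    unfold pi0
    rw [if_neg (by rw [hfalse]; simp), hfalse]
  · refine le_trans (Finset.card_le_card ?_) (invD Φ t i)
    intro j hj
    rw [Finset.mem_filter] at hj ⊢
    exact ⟨hj.1, hrev j hj.2.1, hj.2⟩
  · intro j hne hin
    have := revealZ Φ t i j hin
    exact (h2 j).2 (Φ i j).1 hin (by rw [this]; congr 1; exact Prod.ext rfl hne)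
/-- Per-clause bad event. -/
def badC (Z : Finset (Fin n)) (c : Fin k → Lit n) : Prop :=
  (∃ j, (c j).2 = true) ∧
  (Finset.univ.filter (fun j => (c j).2 = true ∧ (c j).1 ∉ Z)).card ≤ 1 ∧
  ∀ j, (c j).2 = false → (c j).1 ∉ Z

lemma W_eq (Φ : Formula n m k) (Z : Finset (Fin n)) :
    W Φ Z = Finset.univ.filter (fun i => badC Z (Φ i)) := by
  ext i
  rw [W, Finset.mem_filter, Finset.mem_filter]; rfl

/-- Half-size literal set. -/
noncomputable def Dset (n : ℕ) (Z : Finset (Fin n)) : Finset (Lit n) :=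
  Finset.univ.filter (fun l => (l.2 = true ∧ l.1 ∈ Z) ∨ (l.2 = false ∧ l.1 ∉ Z))

lemma card_Dset (Z : Finset (Fin n)) : (Dset n Z).card = n := by
  have h : (Dset n Z).card = (Finset.univ : Finset (Fin n)).card := by
    apply Finset.card_bij (fun (l : Lit n) _ => l.1)
    · intro a _; exact Finset.mem_univ _
    · intro a ha b hb hab
      rw [Dset, Finset.mem_filter] at ha hb
      have : a.2 = b.2 := by
        rcases ha.2 with ⟨h1, h2⟩ | ⟨h1, h2⟩ <;> rcases hb.2 with ⟨h3, h4⟩ | ⟨h3, h4⟩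
        · rw [h1, h3]
        · exfalso; rw [hab] at h2; exact h4 h2
        · exfalso; rw [hab] at h2; exact h2 h4
        · rw [h1, h3]
      exact Prod.ext hab this
    · intro x _
      by_cases hx : x ∈ Z
      · exact ⟨(x, true), by simp [Dset, hx], rfl⟩
      · exact ⟨(x, false), by simp [Dset, hx], rfl⟩
  simpa using h

/-- Injection witnessing the count. -/
noncomputable def inj1 (Z : Finset (Fin n)) (hk : 0 < k) (c : Fin k → Lit n) :
    Fin k × (Fin k → Lit n) :=
  if h : (Finset.univ.filter (fun j => (c j).2 = true ∧ (c j).1 ∉ Z)).Nonempty then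
    ((Finset.univ.filter (fun j => (c j).2 = true ∧ (c j).1 ∉ Z)).min' h,
     Function.update c ((Finset.univ.filter (fun j => (c j).2 = true ∧ (c j).1 ∉ Z)).min' h)
       ((c ((Finset.univ.filter (fun j => (c j).2 = true ∧ (c j).1 ∉ Z)).min' h)).1, false))
  else if h2 : (Finset.univ.filter (fun j => (c j).2 = true)).Nonempty then
    ((Finset.univ.filter (fun j => (c j).2 = true)).min' h2, c)
  else (⟨0, hk⟩, c)

lemma card_badC_le (hk : 0 < k) (Z : Finset (Fin n)) :
    (Finset.univ.filter (fun c : Fin k → Lit n => badC Z c)).card ≤ k * n ^ k := by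
  have htarget : ((Finset.univ : Finset (Fin k)) ×ˢ
      (Fintype.piFinset (fun _ : Fin k => Dset n Z))).card = k * n ^ k := by
    rw [Finset.card_product, Fintype.card_piFinset]
    simp [card_Dset]
  rw [← htarget]
  apply Finset.card_le_card_of_injOn (inj1 Z hk)
  · -- maps to
    intro c hc
    rw [Finset.mem_coe, Finset.mem_filter] at hc
    obtain ⟨-, ⟨j0, hj0⟩, hcard, hnegz⟩ := hc
    rw [Finset.mem_coe, Finset.mem_product]
    by_cases h : (Finset.univ.filter (fun j => (c j).2 = true ∧ (c j).1 ∉ Z)).Nonempty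
    · set jm := (Finset.univ.filter (fun j => (c j).2 = true ∧ (c j).1 ∉ Z)).min' h with hjm
      have hjmmem := Finset.min'_mem _ h
      rw [← hjm] at hjmmem
      rw [Finset.mem_filter] at hjmmem
      have hsingle : ∀ j, (c j).2 = true → (c j).1 ∉ Z → j = jm := by
        intro j hj1 hj2
        obtain ⟨a, ha⟩ := Finset.card_eq_one.mp
          (le_antisymm hcard (Finset.card_pos.mpr h))
        have h1 : j ∈ Finset.univ.filter (fun j => (c j).2 = true ∧ (c j).1 ∉ Z) := by
          rw [Finset.mem_filter]; exact ⟨Finset.mem_univ _, hj1, hj2⟩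
        have h2 : jm ∈ Finset.univ.filter (fun j => (c j).2 = true ∧ (c j).1 ∉ Z) := by
          rw [Finset.mem_filter]; exact ⟨Finset.mem_univ _, hjmmem.2⟩
        rw [ha, Finset.mem_singleton] at h1 h2
        rw [h1, h2]
      rw [inj1, dif_pos h]
      refine ⟨Finset.mem_univ _, ?_⟩
      rw [Fintype.mem_piFinset]
      intro j
      show Function.update c jm ((c jm).1, false) j ∈ Dset n Z
      by_cases hje : j = jm
      · subst hje
        rw [Function.update_self, Dset, Finset.mem_filter]
        exact ⟨Finset.mem_univ _, Or.inr ⟨rfl, hjmmem.2.2⟩⟩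
      · rw [Function.update_of_ne hje, Dset, Finset.mem_filter]
        refine ⟨Finset.mem_univ _, ?_⟩
        cases hsign : (c j).2
        · exact Or.inr ⟨rfl, hnegz j hsign⟩
        · left
          refine ⟨rfl, ?_⟩
          by_contra hnin
          exact hje (hsingle j hsign hnin)
    · have h2 : (Finset.univ.filter (fun j => (c j).2 = true)).Nonempty :=
        ⟨j0, by rw [Finset.mem_filter]; exact ⟨Finset.mem_univ _, hj0⟩⟩
      rw [inj1, dif_neg h, dif_pos h2]
      refine ⟨Finset.mem_univ _, ?_⟩
      rw [Fintype.mem_piFinset]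
      intro j
      show c j ∈ Dset n Z
      rw [Dset, Finset.mem_filter]
      refine ⟨Finset.mem_univ _, ?_⟩
      cases hsign : (c j).2
      · exact Or.inr ⟨rfl, hnegz j hsign⟩
      · left
        refine ⟨rfl, ?_⟩
        by_contra hnin
        exact h ⟨j, by rw [Finset.mem_filter]; exact ⟨Finset.mem_univ _, hsign, hnin⟩⟩
  · -- injective on
    intro c hc c' hc' heq
    rw [Finset.mem_coe, Finset.mem_filter] at hc hc'
    obtain ⟨-, ⟨j0, hj0⟩, hcard, hnegz⟩ := hc
    obtain ⟨-, ⟨j0', hj0'⟩, hcard', hnegz'⟩ := hc'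
    have hne2 : (Finset.univ.filter (fun j => (c j).2 = true)).Nonempty :=
      ⟨j0, by rw [Finset.mem_filter]; exact ⟨Finset.mem_univ _, hj0⟩⟩
    have hne2' : (Finset.univ.filter (fun j => (c' j).2 = true)).Nonempty :=
      ⟨j0', by rw [Finset.mem_filter]; exact ⟨Finset.mem_univ _, hj0'⟩⟩
    by_cases h : (Finset.univ.filter (fun j => (c j).2 = true ∧ (c j).1 ∉ Z)).Nonempty <;>
      by_cases h' : (Finset.univ.filter (fun j => (c' j).2 = true ∧ (c' j).1 ∉ Z)).Nonempty
    · rw [inj1, dif_pos h] at heq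
      rw [inj1, dif_pos h'] at heq
      set jm := (Finset.univ.filter (fun j => (c j).2 = true ∧ (c j).1 ∉ Z)).min' h with hjm
      set jm' := (Finset.univ.filter (fun j => (c' j).2 = true ∧ (c' j).1 ∉ Z)).min' h' with hjm'
      rw [Prod.mk.injEq] at heq
      obtain ⟨hfst, hsnd⟩ := heq
      have hjmmem := Finset.min'_mem _ h
      have hjmmem' := Finset.min'_mem _ h'
      rw [← hjm, Finset.mem_filter] at hjmmem
      rw [← hjm', Finset.mem_filter] at hjmmem'
      rw [hfst] at hsnd hjmmem
      funext j
      by_cases hje : j = jm'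
      · rw [hje]
        have e1 := congrFun hsnd jm'
        rw [Function.update_self, Function.update_self] at e1
        have e2 := congrArg Prod.fst e1
        exact Prod.ext e2 (by rw [hjmmem.2.1, hjmmem'.2.1])
      · have e1 := congrFun hsnd j
        rw [Function.update_of_ne hje, Function.update_of_ne hje] at e1
        exact e1
    · rw [inj1, dif_pos h] at heq
      rw [inj1, dif_neg h', dif_pos hne2'] at heq
      exfalso
      rw [Prod.mk.injEq] at heq
      obtain ⟨hfst, hsnd⟩ := heq
      have e1 := congrFun hsnd ((Finset.univ.filter (fun j => (c j).2 = true ∧ (c j).1 ∉ Z)).min' h)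
      rw [Function.update_self] at e1
      have hmem' := Finset.min'_mem _ hne2'
      rw [Finset.mem_filter] at hmem'
      rw [hfst] at e1
      have : (c' ((Finset.univ.filter (fun j => (c' j).2 = true)).min' hne2')).2 = false := by
        rw [← e1]
      rw [hmem'.2] at this
      simp at this
    · rw [inj1, dif_neg h, dif_pos hne2] at heq
      rw [inj1, dif_pos h'] at heq
      exfalso
      rw [Prod.mk.injEq] at heq
      obtain ⟨hfst, hsnd⟩ := heq
      have e1 := congrFun hsnd ((Finset.univ.filter (fun j => (c' j).2 = true ∧ (c' j).1 ∉ Z)).min' h')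
      rw [Function.update_self] at e1
      have hmem := Finset.min'_mem _ hne2
      rw [Finset.mem_filter] at hmem
      rw [← hfst] at e1
      have : (c ((Finset.univ.filter (fun j => (c j).2 = true)).min' hne2)).2 = false := by
        rw [e1]
      rw [hmem.2] at this
      simp at this
    · rw [inj1, dif_neg h, dif_pos hne2] at heq
      rw [inj1, dif_neg h', dif_pos hne2'] at heq
      exact congrArg Prod.snd heq
lemma sum_weight (Z : Finset (Fin n)) (lam : ℝ) :
    ∑ c : Fin k → Lit n, (if badC Z c then lam else 1) =
      (Fintype.card (Fin k → Lit n) : ℝ) +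
        (lam - 1) * ((Finset.univ.filter (fun c : Fin k → Lit n => badC Z c)).card : ℝ) := by
  rw [Finset.sum_ite]
  simp only [Finset.sum_const, nsmul_eq_mul, mul_one]
  have hsplit := Finset.card_filter_add_card_filter_not
    (s := (Finset.univ : Finset (Fin k → Lit n))) (p := fun c => badC Z c)
  rw [Finset.card_univ] at hsplit
  have : ((Finset.univ.filter (fun c : Fin k → Lit n => ¬ badC Z c)).card : ℝ) =
      (Fintype.card (Fin k → Lit n) : ℝ) -
        ((Finset.univ.filter (fun c : Fin k → Lit n => badC Z c)).card : ℝ) := by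
    have := congrArg (fun x : ℕ => (x : ℝ)) hsplit
    push_cast at this
    linarith
  rw [this]
  ring

lemma prod_exp (Z : Finset (Fin n)) (lam : ℝ) (hlam : 0 ≤ lam) :
    ∑ Φ : Formula n m k, lam ^ ((W Φ Z).card) =
      (∑ c : Fin k → Lit n, (if badC Z c then lam else 1)) ^ m := by
  have h1 : ∀ Φ : Formula n m k, lam ^ ((W Φ Z).card) =
      ∏ i : Fin m, (if badC Z (Φ i) then lam else 1) := by
    intro Φ
    rw [W_eq, Finset.card_filter]
    rw [← Finset.prod_pow_eq_pow_sum]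
    apply Finset.prod_congr rfl
    intro i _
    split_ifs <;> simp
  calc ∑ Φ : Formula n m k, lam ^ ((W Φ Z).card)
      = ∑ Φ : Formula n m k, ∏ i : Fin m, (if badC Z (Φ i) then lam else 1) := by
        exact Finset.sum_congr rfl (fun Φ _ => h1 Φ)
    _ = (∑ c : Fin k → Lit n, (if badC Z c then lam else 1)) ^ m := by
        have hps := Finset.prod_univ_sum
          (t := fun _ : Fin m => (Finset.univ : Finset (Fin k → Lit n)))
          (f := fun _ c => if badC Z c then lam else 1)
        rw [Fintype.piFinset_univ] at hps
        rw [← hps, Finset.prod_const, Finset.card_univ, Fintype.card_fin]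

lemma chernoff_count (Z : Finset (Fin n)) (lam B : ℝ) (hlam : 1 ≤ lam) :
    ((Finset.univ.filter (fun Φ : Formula n m k => B < ((W Φ Z).card : ℝ))).card : ℝ) *
      lam ^ B ≤
      ((Fintype.card (Fin k → Lit n) : ℝ) +
        (lam - 1) * ((Finset.univ.filter (fun c : Fin k → Lit n => badC Z c)).card : ℝ)) ^ m := by
  have hlam0 : (0:ℝ) < lam := lt_of_lt_of_le one_pos hlam
  have step1 : ((Finset.univ.filter (fun Φ : Formula n m k =>
      B < ((W Φ Z).card : ℝ))).card : ℝ) * lam ^ B ≤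
      ∑ Φ : Formula n m k, lam ^ ((W Φ Z).card) := by
    have hc : ((Finset.univ.filter (fun Φ : Formula n m k =>
        B < ((W Φ Z).card : ℝ))).card : ℝ) * lam ^ B =
        ∑ _Φ ∈ Finset.univ.filter (fun Φ : Formula n m k => B < ((W Φ Z).card : ℝ)), lam ^ B := by
      rw [Finset.sum_const, nsmul_eq_mul]
    rw [hc]
    calc (∑ _Φ ∈ Finset.univ.filter (fun Φ : Formula n m k => B < ((W Φ Z).card : ℝ)), lam ^ B)
        ≤ ∑ Φ ∈ Finset.univ.filter (fun Φ : Formula n m k => B < ((W Φ Z).card : ℝ)),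
            lam ^ ((W Φ Z).card) := by
          apply Finset.sum_le_sum
          intro Φ hΦ
          rw [Finset.mem_filter] at hΦ
          rw [← Real.rpow_natCast lam ((W Φ Z).card)]
          exact Real.rpow_le_rpow_of_exponent_le hlam (le_of_lt hΦ.2)
      _ ≤ ∑ Φ : Formula n m k, lam ^ ((W Φ Z).card) := by
          apply Finset.sum_le_sum_of_subset_of_nonneg (Finset.filter_subset _ _)
          intro Φ _ _
          positivity
  calc ((Finset.univ.filter (fun Φ : Formula n m k => B < ((W Φ Z).card : ℝ))).card : ℝ) *
        lam ^ B ≤ ∑ Φ : Formula n m k, lam ^ ((W Φ Z).card) := step1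
    _ = _ := by rw [prod_exp Z lam (le_of_lt hlam0), sum_weight]

lemma union_count (hk : 0 < k) (lam B : ℝ) (hlam : 1 ≤ lam) :
    ((Finset.univ.filter (fun Φ : Formula n m k =>
        ∃ Z : Finset (Fin n), B < ((W Φ Z).card : ℝ))).card : ℝ) * lam ^ B ≤
      2 ^ n * ((Fintype.card (Fin k → Lit n) : ℝ) + (lam - 1) * (k * (n:ℝ) ^ k)) ^ m := by
  have hlam0 : (0:ℝ) < lam := lt_of_lt_of_le one_pos hlam
  have hTot0 : (0:ℝ) ≤ (Fintype.card (Fin k → Lit n) : ℝ) := by positivity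
  have hsub : Finset.univ.filter (fun Φ : Formula n m k =>
      ∃ Z : Finset (Fin n), B < ((W Φ Z).card : ℝ)) ⊆
      Finset.univ.biUnion (fun Z : Finset (Fin n) =>
        Finset.univ.filter (fun Φ : Formula n m k => B < ((W Φ Z).card : ℝ))) := by
    intro Φ hΦ
    rw [Finset.mem_filter] at hΦ
    obtain ⟨-, Z, hZ⟩ := hΦ
    rw [Finset.mem_biUnion]
    exact ⟨Z, Finset.mem_univ _, by rw [Finset.mem_filter]; exact ⟨Finset.mem_univ _, hZ⟩⟩
  have hcard : ((Finset.univ.filter (fun Φ : Formula n m k =>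
      ∃ Z : Finset (Fin n), B < ((W Φ Z).card : ℝ))).card : ℝ) ≤
      ∑ Z : Finset (Fin n), ((Finset.univ.filter
        (fun Φ : Formula n m k => B < ((W Φ Z).card : ℝ))).card : ℝ) := by
    have h1 := Finset.card_le_card hsub
    have h2 := Finset.card_biUnion_le (s := (Finset.univ : Finset (Finset (Fin n))))
      (t := fun Z => Finset.univ.filter (fun Φ : Formula n m k => B < ((W Φ Z).card : ℝ)))
    have := le_trans h1 h2
    exact_mod_cast this
  calc ((Finset.univ.filter (fun Φ : Formula n m k =>
          ∃ Z : Finset (Fin n), B < ((W Φ Z).card : ℝ))).card : ℝ) * lam ^ B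
      ≤ (∑ Z : Finset (Fin n), ((Finset.univ.filter
          (fun Φ : Formula n m k => B < ((W Φ Z).card : ℝ))).card : ℝ)) * lam ^ B := by
        apply mul_le_mul_of_nonneg_right hcard
        positivity
    _ = ∑ Z : Finset (Fin n), ((Finset.univ.filter
          (fun Φ : Formula n m k => B < ((W Φ Z).card : ℝ))).card : ℝ) * lam ^ B := by
        rw [Finset.sum_mul]
    _ ≤ ∑ Z : Finset (Fin n), ((Fintype.card (Fin k → Lit n) : ℝ) +
          (lam - 1) * (k * (n:ℝ) ^ k)) ^ m := by
        apply Finset.sum_le_sum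
        intro Z _
        refine le_trans (chernoff_count Z lam B hlam) ?_
        apply pow_le_pow_left₀
        · have := card_badC_le (n := n) hk Z
          have h0 : (0:ℝ) ≤ ((Finset.univ.filter
              (fun c : Fin k → Lit n => badC Z c)).card : ℝ) := by positivity
          nlinarith [sub_nonneg.mpr hlam]
        · apply add_le_add (le_refl _)
          apply mul_le_mul_of_nonneg_left _ (sub_nonneg.mpr hlam)
          have := card_badC_le (n := n) hk Z
          calc ((Finset.univ.filter (fun c : Fin k → Lit n => badC Z c)).card : ℝ)
              ≤ ((k * n ^ k : ℕ) : ℝ) := by exact_mod_cast this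
            _ = k * (n:ℝ) ^ k := by push_cast; ring
    _ = 2 ^ n * ((Fintype.card (Fin k → Lit n) : ℝ) + (lam - 1) * (k * (n:ℝ) ^ k)) ^ m := by
        rw [Finset.sum_const, Finset.card_univ, Fintype.card_finset, nsmul_eq_mul,
          Fintype.card_fin]
        push_cast
        ring
set_option maxHeartbeats 1600000 in
/-- Lemma 8.  Whp `max_{0≤t≤T} |𝒰_t| ≤ (1+ε/3)ωn`. -/
theorem statement12 (ε : ℝ) (hε0 : 0 < ε) (hε1 : ε < 0.1) :
    ∃ k₀ : ℕ, ∀ k : ℕ, k₀ ≤ k →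
    Tendsto (fun n : ℕ => Pr n (mOf ε k n) k {Φ : Formula n (mOf ε k n) k |
      ∀ t : ℕ, t ≤ TT Φ →
        ((curlyU Φ t).card : ℝ) ≤ (1 + ε / 3) * omOf ε k * n}) atTop (nhds 1) := by
  have hε1' : ε < 1/10 := by norm_num at hε1 ⊢; linarith
  refine ⟨⌈Real.exp (84 / ε ^ 2)⌉₊ + 1, fun k hk => ?_⟩
  have hkpos : 0 < k := lt_of_lt_of_le (Nat.succ_pos _) hk
  have hke : Real.exp (84 / ε ^ 2) ≤ (k : ℝ) := by
    calc Real.exp (84 / ε ^ 2) ≤ (⌈Real.exp (84 / ε ^ 2)⌉₊ : ℝ) := Nat.le_ceil _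
      _ ≤ (k : ℝ) := by exact_mod_cast le_trans (Nat.le_succ _) hk
  have hlogk : 84 / ε ^ 2 ≤ Real.log k := by
    rw [← Real.log_exp (84 / ε ^ 2)]
    exact Real.log_le_log (Real.exp_pos _) hke
  have hlogk0 : 0 ≤ Real.log k := le_trans (by positivity) hlogk
  have hom0 : 0 ≤ omOf ε k := by
    rw [omOf]
    apply mul_nonneg _ hlogk0
    linarith
  set lam : ℝ := 1 + ε / 6 with hlam_def
  have hlam1 : 1 ≤ lam := by rw [hlam_def]; linarith
  have hlam0 : (0:ℝ) < lam := lt_of_lt_of_le one_pos hlam1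
  have hloglam : (ε / 6) / (1 + ε / 6) ≤ Real.log lam := by
    have h1 : Real.log lam⁻¹ ≤ lam⁻¹ - 1 := Real.log_le_sub_one_of_pos (by positivity)
    rw [Real.log_inv] at h1
    have h2 : 1 - lam⁻¹ ≤ Real.log lam := by linarith
    have hpos : (0:ℝ) < 1 + ε / 6 := by linarith
    have h3 : 1 - lam⁻¹ = (ε / 6) / (1 + ε / 6) := by
      rw [hlam_def]
      field_simp
      ring
    linarith
  -- the key per-n estimate
  have key : ∀ n : ℕ, 1 ≤ n →
      1 - Real.exp (-(n:ℝ)) ≤ Pr n (mOf ε k n) k {Φ : Formula n (mOf ε k n) k |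
        ∀ t : ℕ, t ≤ TT Φ →
          ((curlyU Φ t).card : ℝ) ≤ (1 + ε / 3) * omOf ε k * n} := by
    intro n hn
    set mm := mOf ε k n with hmm
    set B : ℝ := (1 + ε / 3) * omOf ε k * n with hB
    have hB0 : 0 ≤ B := by
      rw [hB]; positivity
    -- cardinalities
    set Tot : ℝ := (Fintype.card (Fin k → Lit n) : ℝ) with hTotdef
    have hTot : Tot = 2 ^ k * (n:ℝ) ^ k := by
      rw [hTotdef, Fintype.card_fun, Fintype.card_prod, Fintype.card_fin, Fintype.card_bool,
        Fintype.card_fin]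
      push_cast
      ring
    have hTotpos : 0 < Tot := by
      rw [hTot]
      have : (0:ℝ) < (n:ℝ) := by exact_mod_cast hn
      positivity
    have hcardU : ((Finset.univ : Finset (Formula n mm k)).card : ℝ) = Tot ^ mm := by
      rw [Finset.card_univ, hTotdef]
      rw [show Fintype.card (Formula n mm k) = Fintype.card (Fin k → Lit n) ^ mm by
        rw [Fintype.card_fun, Fintype.card_fin]]
      push_cast
      ring
    have hcardUpos : (0:ℝ) < ((Finset.univ : Finset (Formula n mm k)).card : ℝ) := by
      rw [hcardU]; positivity
    -- the bad count
    set cbad := (Finset.univ.filter (fun Φ : Formula n mm k =>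
      ∃ Z : Finset (Fin n), B < ((W Φ Z).card : ℝ))).card with hcbad
    -- m * k / 2^k ≤ ω n
    have hm_bound : (mm : ℝ) * (k / 2 ^ k) ≤ omOf ε k * n := by
      have hfloor : (mm : ℝ) ≤ (1 - ε) * 2 ^ k * Real.log k / k * n := by
        rw [hmm, mOf]
        apply Nat.floor_le
        have : (0:ℝ) ≤ (1 - ε) := by linarith
        positivity
      have hkR : (0:ℝ) < (k:ℝ) := by exact_mod_cast hkpos
      have h2k : (0:ℝ) < 2 ^ k := by positivity
      calc (mm : ℝ) * (k / 2 ^ k) ≤ ((1 - ε) * 2 ^ k * Real.log k / k * n) * (k / 2 ^ k) := by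
            apply mul_le_mul_of_nonneg_right hfloor
            positivity
        _ = omOf ε k * n := by
            rw [omOf]
            field_simp
    -- main count estimate
    have hcount : (cbad : ℝ) ≤ Tot ^ mm * Real.exp (-(n:ℝ)) := by
      have huc := union_count (n := n) (m := mm) hkpos lam B hlam1
      rw [← hTotdef] at huc
      -- rewrite RHS
      have hrw : Tot + (lam - 1) * (k * (n:ℝ) ^ k) = Tot * (1 + (lam - 1) * (k / 2 ^ k)) := by
        rw [hTot]
        have h2k : (0:ℝ) < 2 ^ k := by positivity
        field_simp
      rw [hrw, mul_pow] at huc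
      have hc_exp : (1 + (lam - 1) * ((k:ℝ) / 2 ^ k)) ^ mm ≤
          Real.exp ((lam - 1) * (omOf ε k * n)) := by
        have hx0 : (0:ℝ) ≤ (lam - 1) * ((k:ℝ) / 2 ^ k) := by
          apply mul_nonneg (by linarith)
          positivity
        calc (1 + (lam - 1) * ((k:ℝ) / 2 ^ k)) ^ mm
            ≤ (Real.exp ((lam - 1) * ((k:ℝ) / 2 ^ k))) ^ mm := by
              apply pow_le_pow_left₀ (by linarith)
              have := Real.add_one_le_exp ((lam - 1) * ((k:ℝ) / 2 ^ k))
              linarith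
          _ = Real.exp ((mm:ℝ) * ((lam - 1) * ((k:ℝ) / 2 ^ k))) := by
              rw [Real.exp_nat_mul]
          _ ≤ Real.exp ((lam - 1) * (omOf ε k * n)) := by
              rw [Real.exp_le_exp]
              calc (mm:ℝ) * ((lam - 1) * ((k:ℝ) / 2 ^ k))
                  = (lam - 1) * ((mm:ℝ) * ((k:ℝ) / 2 ^ k)) := by ring
                _ ≤ (lam - 1) * (omOf ε k * n) := by
                    apply mul_le_mul_of_nonneg_left hm_bound (by linarith)
      -- numeric exponent inequality
      have hnum : (n:ℝ) * Real.log 2 + (lam - 1) * (omOf ε k * n) ≤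
          B * Real.log lam - n := by
        have hl2 : Real.log 2 ≤ 0.7 := le_of_lt (lt_trans Real.log_two_lt_d9 (by norm_num))
        have hBlog : (1 + ε/3) * (omOf ε k * n) * ((ε / 6) / (1 + ε / 6)) ≤ B * Real.log lam := by
          rw [hB]
          have h1 : 0 ≤ (1 + ε/3) * (omOf ε k * n) := by positivity
          calc (1 + ε/3) * (omOf ε k * n) * ((ε / 6) / (1 + ε / 6))
              ≤ (1 + ε/3) * (omOf ε k * n) * Real.log lam :=
                mul_le_mul_of_nonneg_left hloglam h1
            _ = (1 + ε / 3) * omOf ε k * ↑n * Real.log lam := by ring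
        have homega_big : 74 ≤ omOf ε k * ε ^ 2 := by
          rw [omOf]
          have h2 : (84:ℝ) ≤ Real.log k * ε ^ 2 := by
            have h3 := mul_le_mul_of_nonneg_right hlogk (sq_nonneg ε)
            rwa [div_mul_cancel₀ _ (by positivity : (ε:ℝ) ^ 2 ≠ 0)] at h3
          have h4 := mul_le_mul_of_nonneg_left h2 (by linarith : (0:ℝ) ≤ 1 - ε)
          nlinarith [h4]
        have hfrac : (ε / 6) + ε ^ 2 / 37 ≤ (1 + ε/3) * ((ε / 6) / (1 + ε / 6)) := by
          rw [mul_div_assoc']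
          rw [le_div_iff₀ (by linarith : (0:ℝ) < 1 + ε / 6)]
          nlinarith
        have hn0 : (1:ℝ) ≤ (n:ℝ) := by exact_mod_cast hn
        -- combine
        have hmain : (n:ℝ) * Real.log 2 + (ε/6) * (omOf ε k * n) + n ≤
            (1 + ε/3) * (omOf ε k * n) * ((ε / 6) / (1 + ε / 6)) := by
          have h2 : ((ε/6) + ε ^ 2 / 37) * (omOf ε k * n) ≤
              (1 + ε/3) * ((ε / 6) / (1 + ε / 6)) * (omOf ε k * n) := by
            apply mul_le_mul_of_nonneg_right hfrac
            positivity
          have h3 : (ε ^ 2 / 37) * (omOf ε k * n) ≥ 2 * n := by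
            have : (ε ^ 2 / 37) * (omOf ε k) ≥ 2 := by
              nlinarith [homega_big]
            nlinarith [hom0, hn0]
          nlinarith
        have hll : lam - 1 = ε / 6 := by rw [hlam_def]; ring
        rw [hll]
        linarith
      -- put together
      have hfinal : 2 ^ n * (1 + (lam - 1) * ((k:ℝ) / 2 ^ k)) ^ mm ≤
          lam ^ B * Real.exp (-(n:ℝ)) := by
        have h2n : (2:ℝ) ^ n = Real.exp ((n:ℝ) * Real.log 2) := by
          rw [Real.exp_nat_mul, Real.exp_log (by norm_num : (0:ℝ) < 2)]
        have hlamB : lam ^ B = Real.exp (Real.log lam * B) := Real.rpow_def_of_pos hlam0 B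
        calc 2 ^ n * (1 + (lam - 1) * ((k:ℝ) / 2 ^ k)) ^ mm
            ≤ Real.exp ((n:ℝ) * Real.log 2) * Real.exp ((lam - 1) * (omOf ε k * n)) := by
              rw [← h2n]
              apply mul_le_mul_of_nonneg_left hc_exp (by positivity)
          _ = Real.exp ((n:ℝ) * Real.log 2 + (lam - 1) * (omOf ε k * n)) := by
              rw [← Real.exp_add]
          _ ≤ Real.exp (B * Real.log lam - n) := Real.exp_le_exp.mpr hnum
          _ = lam ^ B * Real.exp (-(n:ℝ)) := by
              rw [hlamB, ← Real.exp_add]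
              congr 1
              ring
      -- divide by lam^B
      have hlamBpos : (0:ℝ) < lam ^ B := Real.rpow_pos_of_pos hlam0 B
      have := le_trans huc (by
        calc 2 ^ n * (Tot ^ mm * (1 + (lam - 1) * ((k:ℝ) / 2 ^ k)) ^ mm)
            = Tot ^ mm * (2 ^ n * (1 + (lam - 1) * ((k:ℝ) / 2 ^ k)) ^ mm) := by ring
          _ ≤ Tot ^ mm * (lam ^ B * Real.exp (-(n:ℝ))) := by
              apply mul_le_mul_of_nonneg_left hfinal (by positivity)
          _ = (Tot ^ mm * Real.exp (-(n:ℝ))) * lam ^ B := by ring)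
      exact le_of_mul_le_mul_right this hlamBpos
    -- from bad count to probability
    set A : Set (Formula n mm k) := {Φ : Formula n mm k |
      ∀ t : ℕ, t ≤ TT Φ → ((curlyU Φ t).card : ℝ) ≤ (1 + ε / 3) * omOf ε k * n} with hA
    have hsubset : Finset.univ.filter (fun Φ : Formula n mm k =>
        ¬ ∃ Z : Finset (Fin n), B < ((W Φ Z).card : ℝ)) ⊆
        Finset.univ.filter (fun Φ : Formula n mm k => Φ ∈ A) := by
      intro Φ hΦ
      rw [Finset.mem_filter] at hΦ ⊢
      refine ⟨Finset.mem_univ _, ?_⟩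
      rw [hA]
      intro t _
      push_neg at hΦ
      have h1 := hΦ.2 ((p1 Φ t).Z)
      calc ((curlyU Φ t).card : ℝ) ≤ ((W Φ ((p1 Φ t).Z)).card : ℝ) := by
            exact_mod_cast Finset.card_le_card (detIncl Φ t)
        _ ≤ B := h1
    have hsplit : (Finset.univ.filter (fun Φ : Formula n mm k =>
        ¬ ∃ Z : Finset (Fin n), B < ((W Φ Z).card : ℝ))).card =
        (Finset.univ : Finset (Formula n mm k)).card - cbad := by
      rw [hcbad]
      have := Finset.card_filter_add_card_filter_not
        (s := (Finset.univ : Finset (Formula n mm k)))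
        (p := fun Φ => ∃ Z : Finset (Fin n), B < ((W Φ Z).card : ℝ))
      omega
    have hcbad_le : cbad ≤ (Finset.univ : Finset (Formula n mm k)).card := by
      rw [hcbad]
      exact Finset.card_le_card (Finset.filter_subset _ _)
    -- conclude
    rw [Pr, le_div_iff₀ hcardUpos]
    have hgood_ge : ((Finset.univ : Finset (Formula n mm k)).card : ℝ) - cbad ≤
        ((Finset.univ.filter (fun Φ : Formula n mm k => Φ ∈ A)).card : ℝ) := by
      have h1 := Finset.card_le_card hsubset
      rw [hsplit] at h1
      have h2 : ((Finset.univ : Finset (Formula n mm k)).card - cbad : ℕ) =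
          (((Finset.univ : Finset (Formula n mm k)).card : ℝ) - cbad) := by
        push_cast [Nat.cast_sub hcbad_le]
        ring
      rw [← h2]
      exact_mod_cast h1
    have hc2 : (cbad : ℝ) ≤ ((Finset.univ : Finset (Formula n mm k)).card : ℝ) *
        Real.exp (-(n:ℝ)) := by
      rw [hcardU]; exact hcount
    have hexpand : (1 - Real.exp (-(n:ℝ))) * ((Finset.univ : Finset (Formula n mm k)).card : ℝ)
        = ((Finset.univ : Finset (Formula n mm k)).card : ℝ) -
          ((Finset.univ : Finset (Formula n mm k)).card : ℝ) * Real.exp (-(n:ℝ)) := by ring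
    rw [hexpand]
    have hstep : ((Finset.univ : Finset (Formula n mm k)).card : ℝ) -
        ((Finset.univ : Finset (Formula n mm k)).card : ℝ) * Real.exp (-(n:ℝ)) ≤
        ((Finset.univ : Finset (Formula n mm k)).card : ℝ) - (cbad : ℝ) := by
      linarith [hc2]
    refine le_trans hstep ?_
    convert hgood_ge using 4
    rfl
  -- upper bound
  have key2 : ∀ n : ℕ, Pr n (mOf ε k n) k {Φ : Formula n (mOf ε k n) k |
      ∀ t : ℕ, t ≤ TT Φ →
        ((curlyU Φ t).card : ℝ) ≤ (1 + ε / 3) * omOf ε k * n} ≤ 1 := by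
    intro n
    rw [Pr]
    apply div_le_one_of_le₀
    · exact_mod_cast Finset.card_le_card (Finset.filter_subset _ _)
    · positivity
  -- squeeze
  have hlow : Tendsto (fun n : ℕ => 1 - Real.exp (-(n:ℝ))) atTop (nhds 1) := by
    have h1 : Tendsto (fun n : ℕ => Real.exp (-(n:ℝ))) atTop (nhds 0) := by
      apply Real.tendsto_exp_atBot.comp
      exact tendsto_neg_atTop_atBot.comp tendsto_natCast_atTop_atTop
    have := Tendsto.const_sub (1:ℝ) h1
    simpa using this
  apply tendsto_of_tendsto_of_tendsto_of_le_of_le' hlow tendsto_const_nhds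
  · filter_upwards [Filter.eventually_ge_atTop 1] with n hn
    exact key n hn
  · filter_upwards with n
    exact key2 n

end RandomKSAT
end
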